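/- arXiv:1106.2775 — 10 statements merged into one kernel-verified Lean document; each statement's English description precedes it below -/
import Mathlib

section
/- Let A be an n×n real symmetric matrix, ℓ ∈ ℝ, δ > 0 such that A ≻ (ℓ+δ)I, and let x ∈ ℝⁿ. If (1/δ)·(xᵀ(A−(ℓ+δ)I)⁻²x)/tr((A−(ℓ+δ)I)⁻²) − xᵀ(A−(ℓ+δ)I)⁻¹x ≥ 1, then tr((A + xxᵀ − (ℓ+δ)I)⁻¹) ≤ tr((A − ℓI)⁻¹). -/
open Matrix

section helpers

variable {n : ℕ}

private lemma trace_vecMulVec_mul' (x : Fin n → ℝ) (M : Matrix (Fin n) (Fin n) ℝ) :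
    (vecMulVec x x * M).trace = x ⬝ᵥ M.mulVec x := by
  simp only [Matrix.trace, Matrix.diag, Matrix.mul_apply, vecMulVec_apply, dotProduct,
    Matrix.mulVec, dotProduct]
  rw [Finset.sum_comm]
  refine Finset.sum_congr rfl fun j _ => ?_
  rw [Finset.mul_sum]
  exact Finset.sum_congr rfl fun i _ => by ring

private lemma vecMulVec_mul_mul_vecMulVec (x : Fin n → ℝ) (M : Matrix (Fin n) (Fin n) ℝ) :
    vecMulVec x x * M * vecMulVec x x = (x ⬝ᵥ M.mulVec x) • vecMulVec x x := by
  ext i j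
  simp only [Matrix.mul_apply, vecMulVec_apply, Matrix.smul_apply, dotProduct, Matrix.mulVec,
    dotProduct, smul_eq_mul, Finset.sum_mul, Finset.mul_sum]
  rw [Finset.sum_comm]
  refine Finset.sum_congr rfl fun l _ => Finset.sum_congr rfl fun k _ => by ring

private lemma psd_trace_nonneg {M : Matrix (Fin n) (Fin n) ℝ} (h : M.PosSemidef) :
    0 ≤ M.trace := by
  refine Finset.sum_nonneg fun i _ => ?_
  simpa using h.dotProduct_mulVec_nonneg (Pi.single i 1)

private lemma pd_trace_pos {M : Matrix (Fin n) (Fin n) ℝ} (hn : 0 < n) (h : M.PosDef) :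
    0 < M.trace := by
  have : Nonempty (Fin n) := ⟨⟨0, hn⟩⟩
  refine Finset.sum_pos (fun i _ => ?_) Finset.univ_nonempty
  have hne : (Pi.single i 1 : Fin n → ℝ) ≠ 0 := by
    intro hcontra
    have := congrFun hcontra i
    simp at this
  simpa using h.dotProduct_mulVec_pos hne

end helpers

theorem feasible_lower_shift {n : ℕ} (A : Matrix (Fin n) (Fin n) ℝ) (hA : A.IsSymm)
    (ℓ δ : ℝ) (hδ : 0 < δ) (x : Fin n → ℝ)
    (hpos : (A - (ℓ + δ) • (1 : Matrix (Fin n) (Fin n) ℝ)).PosDef)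
    (hcond : 1 ≤ (1 / δ) * ((x ⬝ᵥ ((A - (ℓ + δ) • 1)⁻¹ ^ 2).mulVec x)
        / ((A - (ℓ + δ) • (1 : Matrix (Fin n) (Fin n) ℝ))⁻¹ ^ 2).trace)
      - x ⬝ᵥ ((A - (ℓ + δ) • 1)⁻¹).mulVec x) :
    (A + vecMulVec x x - (ℓ + δ) • 1)⁻¹.trace ≤ (A - ℓ • 1)⁻¹.trace := by
  rcases Nat.eq_zero_or_pos n with hn | hn
  · subst hn
    simp [Matrix.trace]
  set B : Matrix (Fin n) (Fin n) ℝ := A - (ℓ + δ) • 1 with hBdef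
  set C : Matrix (Fin n) (Fin n) ℝ := A - ℓ • 1 with hCdef
  rw [pow_two] at hcond
  set V : Matrix (Fin n) (Fin n) ℝ := vecMulVec x x with hVdef
  set q1 : ℝ := x ⬝ᵥ B⁻¹.mulVec x with hq1def
  set q2 : ℝ := x ⬝ᵥ (B⁻¹ * B⁻¹).mulVec x with hq2def
  set t : ℝ := (B⁻¹ * B⁻¹).trace with htdef
  set s : ℝ := (B⁻¹ * C⁻¹).trace with hsdef
  have hB : B.PosDef := hpos
  have hBu : IsUnit B.det := hB.det_pos.ne'.isUnit
  have hBB : B * B⁻¹ = 1 := Matrix.mul_nonsing_inv _ hBu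
  have hBB' : B⁻¹ * B = 1 := Matrix.nonsing_inv_mul _ hBu
  have hBinv : B⁻¹.PosDef := hB.inv
  have hCB : C = B + δ • 1 := by rw [hCdef, hBdef, add_smul]; abel
  have hδ1 : (δ • (1 : Matrix (Fin n) (Fin n) ℝ)).PosSemidef := by
    rw [Matrix.smul_one_eq_diagonal]
    exact Matrix.PosSemidef.diagonal fun i => hδ.le
  have hC : C.PosDef := hCB ▸ hB.add_posSemidef hδ1
  have hCu : IsUnit C.det := hC.det_pos.ne'.isUnit
  have hCC : C * C⁻¹ = 1 := Matrix.mul_nonsing_inv _ hCu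
  have hCinv : C⁻¹.PosDef := hC.inv
  have hsymB : (B⁻¹)ᵀ = B⁻¹ := by
    rw [← Matrix.conjTranspose_eq_transpose_of_trivial]
    exact hBinv.isHermitian.eq
  -- basic positivity facts
  have hq1 : 0 ≤ q1 := by
    have := hBinv.posSemidef.dotProduct_mulVec_nonneg x
    simpa [hq1def] using this
  have hq1pos : (0 : ℝ) < 1 + q1 := by linarith
  have hB2 : (B⁻¹ * B⁻¹).PosDef := by
    refine Matrix.PosDef.of_dotProduct_mulVec_pos ?_ (fun y hy => ?_)
    · rw [Matrix.IsHermitian, Matrix.conjTranspose_mul, hBinv.isHermitian.eq]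
    · have hy' : B⁻¹ *ᵥ y ≠ 0 := by
        intro hzero
        apply hy
        have := congrArg (fun v => B *ᵥ v) hzero
        simpa [Matrix.mulVec_mulVec, hBB, Matrix.one_mulVec, Matrix.mulVec_zero] using this
      have hpos' : 0 < (B⁻¹ *ᵥ y) ⬝ᵥ (B⁻¹ *ᵥ y) := by
        rcases Function.ne_iff.mp hy' with ⟨i, hi⟩
        refine Finset.sum_pos' (fun j _ => mul_self_nonneg _) ⟨i, Finset.mem_univ i, ?_⟩
        exact mul_self_pos.mpr (by simpa using hi)
      calc (0:ℝ) < (B⁻¹ *ᵥ y) ⬝ᵥ (B⁻¹ *ᵥ y) := hpos'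
        _ = star y ⬝ᵥ (B⁻¹ * B⁻¹) *ᵥ y := by
            rw [← Matrix.mulVec_mulVec, Matrix.dotProduct_mulVec, ← hsymB,
              Matrix.vecMul_transpose, hsymB]
            simp [dotProduct_comm]
  have ht : 0 < t := pd_trace_pos hn hB2
  -- key resolvent identity
  have hCsubB : C - B = δ • (1 : Matrix (Fin n) (Fin n) ℝ) := by rw [hCB]; abel
  have hdiff : B⁻¹ - C⁻¹ = δ • (B⁻¹ * C⁻¹) := by
    calc B⁻¹ - C⁻¹ = B⁻¹ * (C * C⁻¹) - (B⁻¹ * B) * C⁻¹ := by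
          rw [hCC, hBB', mul_one, one_mul]
      _ = B⁻¹ * (C - B) * C⁻¹ := by noncomm_ring
      _ = δ • (B⁻¹ * C⁻¹) := by
          rw [hCsubB, Matrix.mul_smul, Matrix.smul_mul, mul_one]
  have htraceC : C⁻¹.trace = B⁻¹.trace - δ * s := by
    have h : B⁻¹.trace - C⁻¹.trace = δ * s := by
      rw [← Matrix.trace_sub, hdiff, Matrix.trace_smul, smul_eq_mul]
    linarith
  -- s ≤ t
  have hBCB : (B⁻¹ * C⁻¹ * B⁻¹).PosSemidef := by
    have := hCinv.posSemidef.conjTranspose_mul_mul_same B⁻¹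
    rwa [hBinv.isHermitian.eq] at this
  have hts : t - s = δ * (B⁻¹ * C⁻¹ * B⁻¹).trace := by
    have h1 : B⁻¹ * B⁻¹ - B⁻¹ * C⁻¹ = δ • (B⁻¹ * (B⁻¹ * C⁻¹)) := by
      rw [← Matrix.mul_sub, hdiff, Matrix.mul_smul]
    rw [htdef, hsdef, ← Matrix.trace_sub, h1, Matrix.trace_smul, smul_eq_mul]
    congr 1
    rw [← Matrix.trace_mul_comm (B⁻¹ * C⁻¹) B⁻¹, mul_assoc]
  have hst : s ≤ t := by nlinarith [psd_trace_nonneg hBCB]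
  -- Sherman–Morrison
  set c : ℝ := (1 + q1)⁻¹ with hcdef
  have hc : c + c * q1 = 1 := by
    rw [hcdef]
    field_simp
  have hVBV : V * B⁻¹ * V = q1 • V := vecMulVec_mul_mul_vecMulVec x B⁻¹
  have key : (B + V) * (B⁻¹ - c • (B⁻¹ * (V * B⁻¹))) = 1 := by
    rw [add_mul, mul_sub, mul_sub, hBB, Matrix.mul_smul, Matrix.mul_smul,
      ← mul_assoc, hBB, one_mul, ← mul_assoc, ← mul_assoc, hVBV, Matrix.smul_mul,
      smul_smul]
    have h3 : c • (V * B⁻¹) + (c * q1) • (V * B⁻¹) = V * B⁻¹ := by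
      rw [← add_smul, hc, one_smul]
    have h4 : (1 : Matrix (Fin n) (Fin n) ℝ) - c • (V * B⁻¹) +
        (V * B⁻¹ - (c * q1) • (V * B⁻¹)) =
        1 + (V * B⁻¹ - (c • (V * B⁻¹) + (c * q1) • (V * B⁻¹))) := by abel
    rw [h4, h3, sub_self, add_zero]
  have hD : A + V - (ℓ + δ) • (1 : Matrix (Fin n) (Fin n) ℝ) = B + V := by
    rw [hBdef]; abel
  have hDinv : (B + V)⁻¹ = B⁻¹ - c • (B⁻¹ * (V * B⁻¹)) := Matrix.inv_eq_right_inv key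
  have htr2 : (B⁻¹ * (V * B⁻¹)).trace = q2 := by
    rw [Matrix.trace_mul_comm B⁻¹ (V * B⁻¹), mul_assoc, hVdef, trace_vecMulVec_mul']
  have htraceD : (B + V)⁻¹.trace = B⁻¹.trace - c * q2 := by
    rw [hDinv, Matrix.trace_sub, Matrix.trace_smul, smul_eq_mul, htr2]
  -- final arithmetic
  rw [hD, htraceD, htraceC]
  have e1 : 1 + q1 ≤ 1 / δ * (q2 / t) := by linarith
  have e2 : 1 / δ * (q2 / t) = q2 / (δ * t) := by
    rw [div_mul_div_comm, one_mul]
  rw [e2, le_div_iff₀ (mul_pos hδ ht)] at e1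
  have h6 : δ * t ≤ q2 / (1 + q1) := (le_div_iff₀ hq1pos).mpr (by nlinarith)
  have h7 : δ * s ≤ δ * t := by nlinarith
  have h8 : c * q2 = q2 / (1 + q1) := by rw [hcdef, inv_mul_eq_div]
  linarith [h8 ▸ h6]
end

section
/- Let A be an n×n symmetric matrix, ℓ ∈ ℝ, φ > 0 with A ≻ ℓI and tr((A−ℓI)⁻¹) ≤ φ. Then for every 0 < δ < 1/φ: (a) A ≻ (ℓ+δ)I; (b) q₁(0,x) ≤ q₁(δ,x) ≤ (1−δφ)⁻¹ q₁(0,x) for every x ∈ ℝⁿ, where q₁(δ,x) = xᵀ(A−(ℓ+δ)I)⁻¹x. -/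
open Matrix

theorem regularity_q1 {n : ℕ} (A : Matrix (Fin n) (Fin n) ℝ) (hA : A.IsSymm)
    (ℓ φ δ : ℝ) (hφ : 0 < φ)
    (hpos : (A - ℓ • (1 : Matrix (Fin n) (Fin n) ℝ)).PosDef)
    (htr : (A - ℓ • (1 : Matrix (Fin n) (Fin n) ℝ))⁻¹.trace ≤ φ)
    (hδ : 0 < δ) (hδφ : δ < 1 / φ) :
    (A - (ℓ + δ) • (1 : Matrix (Fin n) (Fin n) ℝ)).PosDef ∧
    ∀ x : Fin n → ℝ,
      x ⬝ᵥ ((A - ℓ • 1)⁻¹).mulVec x ≤ x ⬝ᵥ ((A - (ℓ + δ) • 1)⁻¹).mulVec x ∧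
      x ⬝ᵥ ((A - (ℓ + δ) • 1)⁻¹).mulVec x
        ≤ (1 - δ * φ)⁻¹ * (x ⬝ᵥ ((A - ℓ • 1)⁻¹).mulVec x) := by
  set B := A - ℓ • (1 : Matrix (Fin n) (Fin n) ℝ) with hBdef
  have hB : B.IsHermitian := hpos.isHermitian
  set U : Matrix (Fin n) (Fin n) ℝ := (hB.eigenvectorUnitary : Matrix (Fin n) (Fin n) ℝ) with hUdef
  set V : Matrix (Fin n) (Fin n) ℝ := star U with hVdef
  have hUV : U * V = 1 := (Matrix.mem_unitaryGroup_iff).mp hB.eigenvectorUnitary.2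
  have hVU : V * U = 1 := (Matrix.mem_unitaryGroup_iff').mp hB.eigenvectorUnitary.2
  set lam := hB.eigenvalues with hlamdef
  set conj : (Fin n → ℝ) → Matrix (Fin n) (Fin n) ℝ := fun c => U * diagonal c * V with hconjdef
  have hspec : B = conj lam := by simpa using hB.spectral_theorem
  have hmul : ∀ c d : Fin n → ℝ, conj c * conj d = conj (c * d) := by
    intro c d
    simp only [hconjdef, Matrix.mul_assoc]
    rw [← Matrix.mul_assoc V U, hVU, one_mul, ← Matrix.mul_assoc (diagonal c),
      diagonal_mul_diagonal]
    rfl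
  have hone : conj 1 = 1 := by
    show U * diagonal (fun _ => (1:ℝ)) * V = 1
    rw [diagonal_one, mul_one, hUV]
  have htrace : ∀ c : Fin n → ℝ, (conj c).trace = ∑ i, c i := by
    intro c
    simp only [hconjdef]
    rw [trace_mul_comm, ← Matrix.mul_assoc, hVU, one_mul, trace_diagonal]
  have hquad : ∀ (c : Fin n → ℝ) (x : Fin n → ℝ),
      x ⬝ᵥ (conj c).mulVec x = ∑ i, c i * (V.mulVec x i)^2 := by
    intro c x
    simp only [hconjdef]
    rw [← mulVec_mulVec, ← mulVec_mulVec, dotProduct_mulVec]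
    have : x ᵥ* U = V.mulVec x := by
      rw [hVdef, star_eq_conjTranspose, conjTranspose_eq_transpose_of_trivial, mulVec_transpose]
    rw [this]
    simp [dotProduct, mulVec_diagonal]
    exact Finset.sum_congr rfl fun i _ => by ring
  have hherm : ∀ c : Fin n → ℝ, (conj c).IsHermitian := by
    intro c
    show (U * diagonal c * V)ᴴ = U * diagonal c * V
    rw [hVdef, star_eq_conjTranspose]
    simp [conjTranspose_mul, diagonal_conjTranspose, star_trivial, Matrix.mul_assoc]
  have hVx : ∀ x : Fin n → ℝ, x ≠ 0 → V.mulVec x ≠ 0 := by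
    intro x hx h
    apply hx
    have : U.mulVec (V.mulVec x) = 0 := by rw [h, mulVec_zero]
    rwa [mulVec_mulVec, hUV, one_mulVec] at this
  have hposdef : ∀ c : Fin n → ℝ, (∀ i, 0 < c i) → (conj c).PosDef := by
    intro c hc
    refine PosDef.of_dotProduct_mulVec_pos (hherm c) (fun x hx => ?_)
    rw [show (star x : Fin n → ℝ) = x from star_trivial x, hquad]
    obtain ⟨i, hi⟩ := Function.ne_iff.mp (hVx x hx)
    apply Finset.sum_pos' (fun j _ => mul_nonneg (hc j).le (sq_nonneg _))
    exact ⟨i, Finset.mem_univ i, mul_pos (hc i)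
      (lt_of_le_of_ne (sq_nonneg _) (Ne.symm (pow_ne_zero 2 hi)))⟩
  have hinv : ∀ c : Fin n → ℝ, (∀ i, c i ≠ 0) → (conj c)⁻¹ = conj (fun i => (c i)⁻¹) := by
    intro c hc
    apply inv_eq_right_inv
    rw [hmul]
    convert hone using 2
    ext i
    exact mul_inv_cancel₀ (hc i)
  have hlampos : ∀ i, 0 < lam i := hpos.eigenvalues_pos
  have hinvB : B⁻¹ = conj (fun i => (lam i)⁻¹) := by
    rw [hspec]; exact hinv lam (fun i => (hlampos i).ne')
  have hshift : A - (ℓ + δ) • (1 : Matrix (Fin n) (Fin n) ℝ) = conj (fun i => lam i - δ) := by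
    have h1 : A - (ℓ + δ) • (1 : Matrix (Fin n) (Fin n) ℝ) = B - δ • 1 := by
      rw [hBdef, add_smul]; abel
    have h2 : conj (fun i => lam i - δ) = conj lam - δ • 1 := by
      have hd : diagonal (fun i => lam i - δ) = diagonal lam - δ • 1 := by
        rw [← diagonal_one, ← diagonal_smul, diagonal_sub]
        congr 1
        funext i
        simp
      simp only [hconjdef, hd, Matrix.sub_mul, Matrix.mul_sub, Matrix.mul_smul,
        Matrix.smul_mul, mul_one, hUV]
    rw [h1, h2, hspec]
  have hlamge : ∀ i, 1 / φ ≤ lam i := by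
    intro i
    have htr' : ∑ j, (lam j)⁻¹ ≤ φ := by
      rw [← htrace, ← hinvB]; exact htr
    have h1 : (lam i)⁻¹ ≤ ∑ j, (lam j)⁻¹ :=
      Finset.single_le_sum (f := fun j => (lam j)⁻¹) (fun j _ => inv_nonneg.mpr (hlampos j).le)
        (Finset.mem_univ i)
    have h2 : (lam i)⁻¹ ≤ φ := h1.trans htr'
    rw [div_le_iff₀ hφ]
    have := mul_le_mul_of_nonneg_left h2 (hlampos i).le
    rwa [mul_inv_cancel₀ (hlampos i).ne'] at this
  have h1φ : 0 < 1 - δ * φ := by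
    have : δ * φ < 1 := by
      have := (lt_div_iff₀ hφ).mp hδφ
      linarith
    linarith
  have hlamδ : ∀ i, 0 < lam i - δ := by
    intro i
    have := hlamge i
    have : δ < lam i := lt_of_lt_of_le hδφ this
    linarith
  have hshiftinv : (A - (ℓ + δ) • (1 : Matrix (Fin n) (Fin n) ℝ))⁻¹
      = conj (fun i => (lam i - δ)⁻¹) := by
    rw [hshift, hinv _ (fun i => (hlamδ i).ne')]
  refine ⟨by rw [hshift]; exact hposdef _ hlamδ, fun x => ?_⟩
  rw [hinvB, hshiftinv, hquad, hquad]
  set y := V.mulVec x with hydef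
  constructor
  · apply Finset.sum_le_sum
    intro i _
    have hle : (lam i)⁻¹ ≤ (lam i - δ)⁻¹ := by
      apply inv_anti₀ (hlamδ i)
      linarith
    exact mul_le_mul_of_nonneg_right hle (sq_nonneg _)
  · rw [Finset.mul_sum]
    apply Finset.sum_le_sum
    intro i _
    have h1 : 1 ≤ lam i * φ := by
      have := (div_le_iff₀ hφ).mp (hlamge i)
      linarith
    have hle : (1 - δ * φ) * lam i ≤ lam i - δ := by nlinarith
    have key : (lam i - δ)⁻¹ ≤ ((1 - δ * φ) * lam i)⁻¹ :=
      inv_anti₀ (mul_pos h1φ (hlampos i)) hle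
    rw [mul_inv] at key
    calc (lam i - δ)⁻¹ * y i ^ 2 ≤ (1 - δ * φ)⁻¹ * (lam i)⁻¹ * y i ^ 2 :=
          mul_le_mul_of_nonneg_right key (sq_nonneg _)
      _ = (1 - δ * φ)⁻¹ * ((lam i)⁻¹ * y i ^ 2) := by ring
end

section
/- Let A be an n×n symmetric matrix, ℓ ∈ ℝ, φ > 0 with A ≻ ℓI and tr((A−ℓI)⁻¹) ≤ φ. Then for every 0 < δ < 1/φ and every x ∈ ℝⁿ, the quadratic form q₂(δ,x) = xᵀ(A−(ℓ+δ)I)⁻²x / tr((A−(ℓ+δ)I)⁻²) satisfies (1−δφ)² q₂(0,x) ≤ q₂(δ,x) ≤ (1−δφ)⁻² q₂(0,x). -/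
open Matrix

theorem regularity_q2 {n : ℕ} (A : Matrix (Fin n) (Fin n) ℝ) (hA : A.IsSymm)
    (ℓ φ δ : ℝ) (hφ : 0 < φ)
    (hpos : (A - ℓ • (1 : Matrix (Fin n) (Fin n) ℝ)).PosDef)
    (htr : (A - ℓ • (1 : Matrix (Fin n) (Fin n) ℝ))⁻¹.trace ≤ φ)
    (hδ : 0 < δ) (hδφ : δ < 1 / φ) (x : Fin n → ℝ) :
    (1 - δ * φ) ^ 2 * ((x ⬝ᵥ ((A - ℓ • 1)⁻¹ ^ 2).mulVec x)
        / ((A - ℓ • (1 : Matrix (Fin n) (Fin n) ℝ))⁻¹ ^ 2).trace)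
      ≤ (x ⬝ᵥ ((A - (ℓ + δ) • 1)⁻¹ ^ 2).mulVec x)
        / ((A - (ℓ + δ) • (1 : Matrix (Fin n) (Fin n) ℝ))⁻¹ ^ 2).trace ∧
    (x ⬝ᵥ ((A - (ℓ + δ) • 1)⁻¹ ^ 2).mulVec x)
        / ((A - (ℓ + δ) • (1 : Matrix (Fin n) (Fin n) ℝ))⁻¹ ^ 2).trace
      ≤ ((1 - δ * φ)⁻¹) ^ 2 * ((x ⬝ᵥ ((A - ℓ • 1)⁻¹ ^ 2).mulVec x)
        / ((A - ℓ • (1 : Matrix (Fin n) (Fin n) ℝ))⁻¹ ^ 2).trace) := by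
  set B : Matrix (Fin n) (Fin n) ℝ := A - ℓ • 1 with hBdef
  have hB : B.IsHermitian := hpos.1
  set U : Matrix (Fin n) (Fin n) ℝ := (hB.eigenvectorUnitary : Matrix (Fin n) (Fin n) ℝ)
    with hUdef
  set μ : Fin n → ℝ := hB.eigenvalues with hμdef
  have hU1 : star U * U = 1 := hB.eigenvectorUnitary.2.1
  have hU2 : U * star U = 1 := hB.eigenvectorUnitary.2.2
  -- abbreviation for conjugated diagonal matrices
  set M : (Fin n → ℝ) → Matrix (Fin n) (Fin n) ℝ :=
    fun g => U * diagonal g * star U with hMdef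
  have hMmul : ∀ g h : Fin n → ℝ, M g * M h = M (g * h) := by
    intro g h
    simp only [hMdef]
    calc U * diagonal g * star U * (U * diagonal h * star U)
        = U * diagonal g * (star U * U) * diagonal h * star U := by
          noncomm_ring
      _ = U * (diagonal g * diagonal h) * star U := by
          rw [hU1]; noncomm_ring
      _ = U * diagonal (g * h) * star U := by rw [diagonal_mul_diagonal]; rfl
  have hMconst : ∀ c : ℝ, M (fun _ => c) = c • 1 := by
    intro c
    have : (diagonal (fun _ : Fin n => c)) = c • (1 : Matrix (Fin n) (Fin n) ℝ) := by
      ext i j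
      by_cases h : i = j <;> simp [h, Matrix.diagonal_apply, Matrix.one_apply]
    simp only [hMdef, this]
    rw [Matrix.mul_smul, Matrix.smul_mul, mul_one, hU2]
  have hMsub : ∀ g h : Fin n → ℝ, M g - M h = M (g - h) := by
    intro g h
    simp only [hMdef]
    rw [← Matrix.sub_mul, ← Matrix.mul_sub, diagonal_sub]
    rfl
  have hMinv : ∀ g : Fin n → ℝ, (∀ i, g i ≠ 0) → (M g)⁻¹ = M g⁻¹ := by
    intro g hg
    apply Matrix.inv_eq_right_inv
    rw [hMmul]
    have : g * g⁻¹ = fun _ => (1 : ℝ) := by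
      funext i; exact mul_inv_cancel₀ (hg i)
    rw [this, hMconst, one_smul]
  have hMsq : ∀ g : Fin n → ℝ, (M g) ^ 2 = M (g ^ 2) := by
    intro g
    rw [sq, hMmul, ← sq]
  have hMtrace : ∀ g : Fin n → ℝ, (M g).trace = ∑ i, g i := by
    intro g
    simp only [hMdef]
    rw [trace_mul_cycle, hU1, Matrix.one_mul, trace_diagonal]
  set y : Fin n → ℝ := (star U).mulVec x with hydef
  have hMquad : ∀ g : Fin n → ℝ, x ⬝ᵥ (M g).mulVec x = ∑ i, g i * (y i) ^ 2 := by
    intro g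
    simp only [hMdef]
    rw [← Matrix.mulVec_mulVec, ← Matrix.mulVec_mulVec, Matrix.dotProduct_mulVec]
    have hx : x ᵥ* U = y := by
      funext i
      simp only [hydef, Matrix.vecMul, Matrix.mulVec, dotProduct]
      exact Finset.sum_congr rfl fun j _ => by simp [mul_comm]
    rw [hx]
    simp only [Matrix.mulVec_diagonal, dotProduct]
    exact Finset.sum_congr rfl fun i _ => by simp [hydef]; ring
  -- spectral theorem
  have hBM : B = M μ := by
    have := hB.spectral_theorem
    simpa [hMdef, hUdef, hμdef, Function.comp] using this
  -- eigenvalue facts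
  have hμpos : ∀ i, 0 < μ i := hpos.eigenvalues_pos
  have hμinv_le : ∀ i, (μ i)⁻¹ ≤ φ := by
    intro i
    have hBinv : B⁻¹ = M μ⁻¹ := by
      rw [hBM]; exact hMinv μ (fun i => (hμpos i).ne')
    have htr' : ∑ j, (μ j)⁻¹ ≤ φ := by
      rw [hBdef] at htr
      rw [hBdef] at hBinv
      rw [hBinv, hMtrace] at htr
      simpa using htr
    refine le_trans ?_ htr'
    exact Finset.single_le_sum (f := fun j => (μ j)⁻¹)
      (fun j _ => (inv_pos.mpr (hμpos j)).le) (Finset.mem_univ i)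
  have hφμ : ∀ i, 1 ≤ φ * μ i := by
    intro i
    have := hμinv_le i
    rw [inv_le_iff_one_le_mul₀ (hμpos i)] at this
    linarith [this]
  have hδμ : ∀ i, δ < μ i := by
    intro i
    have h1 : δ < 1 / φ := hδφ
    have h2 : 1 / φ ≤ μ i := by
      rw [div_le_iff₀ hφ]
      linarith [hφμ i, mul_comm φ (μ i)]
    linarith
  set c : ℝ := 1 - δ * φ with hcdef
  have hc0 : 0 < c := by
    have : δ * φ < 1 := by
      have := (lt_div_iff₀ hφ).mp hδφ
      linarith
    simp only [hcdef]; linarith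
  have hc1 : c ≤ 1 := by
    have : 0 < δ * φ := mul_pos hδ hφ
    simp only [hcdef]; linarith
  -- scalar bounds
  set g₀ : Fin n → ℝ := fun i => ((μ i)⁻¹) ^ 2 with hg₀
  set g₁ : Fin n → ℝ := fun i => ((μ i - δ)⁻¹) ^ 2 with hg₁
  have hg₀pos : ∀ i, 0 < g₀ i := fun i => by
    have := hμpos i; simp only [hg₀]; positivity
  have hg₁pos : ∀ i, 0 < g₁ i := fun i => by
    have h : 0 < μ i - δ := by linarith [hδμ i]
    simp only [hg₁]; positivity
  have hkey1 : ∀ i, g₀ i ≤ g₁ i := by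
    intro i
    have h1 : 0 < μ i - δ := by linarith [hδμ i]
    have h2 : μ i - δ ≤ μ i := by linarith
    have : (μ i)⁻¹ ≤ (μ i - δ)⁻¹ := by
      apply one_div_le_one_div_of_le h1 h2 |>.trans_eq (one_div _) |>.trans_eq' (one_div _)
    simp only [hg₀, hg₁]
    have h3 : 0 ≤ (μ i)⁻¹ := (inv_pos.mpr (hμpos i)).le
    exact pow_le_pow_left₀ h3 this 2
  have hkey2 : ∀ i, g₁ i ≤ (c⁻¹) ^ 2 * g₀ i := by
    intro i
    have h1 : 0 < μ i - δ := by linarith [hδμ i]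
    have hcμ : c * μ i ≤ μ i - δ := by
      have := hφμ i
      simp only [hcdef]
      have : δ ≤ δ * (φ * μ i) := le_mul_of_one_le_right hδ.le (hφμ i)
      nlinarith
    have hcμpos : 0 < c * μ i := mul_pos hc0 (hμpos i)
    have hinv : (μ i - δ)⁻¹ ≤ (c * μ i)⁻¹ := by
      apply inv_anti₀ hcμpos hcμ
    have h2 : ((μ i - δ)⁻¹) ^ 2 ≤ ((c * μ i)⁻¹) ^ 2 := by
      apply pow_le_pow_left₀ (inv_pos.mpr h1).le hinv
    calc g₁ i ≤ ((c * μ i)⁻¹) ^ 2 := h2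
      _ = (c⁻¹) ^ 2 * g₀ i := by
        simp only [hg₀, mul_inv]; ring
  -- express the four quantities
  have hE0 : (A - ℓ • (1 : Matrix (Fin n) (Fin n) ℝ))⁻¹ ^ 2 = M g₀ := by
    rw [← hBdef, hBM, hMinv μ (fun i => (hμpos i).ne'), hMsq]
    congr 1
  have hE1 : (A - (ℓ + δ) • (1 : Matrix (Fin n) (Fin n) ℝ))⁻¹ ^ 2 = M g₁ := by
    have hsub : A - (ℓ + δ) • (1 : Matrix (Fin n) (Fin n) ℝ)
        = M (μ - fun _ => δ) := by
      rw [add_smul, sub_add_eq_sub_sub, ← hBdef, hBM, ← hMconst δ, hMsub]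
    rw [hsub, hMinv _ (fun i => by
      have := hδμ i
      simp only [Pi.sub_apply]
      intro h; rw [sub_eq_zero] at h; exact absurd h.symm (ne_of_lt this)), hMsq]
    congr 1
  rw [hE0, hE1, hMtrace, hMtrace, hMquad, hMquad]
  set N₀ : ℝ := ∑ i, g₀ i * y i ^ 2 with hN₀
  set N₁ : ℝ := ∑ i, g₁ i * y i ^ 2 with hN₁
  set T₀ : ℝ := ∑ i, g₀ i with hT₀
  set T₁ : ℝ := ∑ i, g₁ i with hT₁
  have hN₀nonneg : 0 ≤ N₀ := Finset.sum_nonneg fun i _ => by positivity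
  have hNle : N₀ ≤ N₁ := Finset.sum_le_sum fun i _ =>
    mul_le_mul_of_nonneg_right (hkey1 i) (sq_nonneg _)
  have hNle2 : N₁ ≤ (c⁻¹) ^ 2 * N₀ := by
    rw [hN₁, hN₀, Finset.mul_sum]
    exact Finset.sum_le_sum fun i _ => by
      rw [← mul_assoc]
      exact mul_le_mul_of_nonneg_right (hkey2 i) (sq_nonneg _)
  have hTle : T₀ ≤ T₁ := Finset.sum_le_sum fun i _ => hkey1 i
  have hTle2 : T₁ ≤ (c⁻¹) ^ 2 * T₀ := by
    rw [hT₁, hT₀, Finset.mul_sum]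
    exact Finset.sum_le_sum fun i _ => hkey2 i
  rcases isEmpty_or_nonempty (Fin n) with he | hne
  · have h0 : T₀ = 0 := by simp [hT₀]
    have h1 : T₁ = 0 := by simp [hT₁]
    rw [h0, h1]
    simp
  · have hT₀pos : 0 < T₀ := Finset.sum_pos (fun i _ => hg₀pos i) Finset.univ_nonempty
    have hT₁pos : 0 < T₁ := Finset.sum_pos (fun i _ => hg₁pos i) Finset.univ_nonempty
    have hN₁nonneg : 0 ≤ N₁ := le_trans hN₀nonneg hNle
    constructor
    · have heq : c ^ 2 * (N₀ / T₀) = N₀ / ((c⁻¹) ^ 2 * T₀) := by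
        field_simp
      rw [heq]
      apply div_le_div₀ hN₁nonneg hNle hT₁pos hTle2
    · have heq : (c⁻¹) ^ 2 * (N₀ / T₀) = ((c⁻¹) ^ 2 * N₀) / T₀ := by
        ring
      rw [heq]
      apply div_le_div₀ (by positivity) hNle2 hT₀pos hTle
end

section
/- Let A be an n×n symmetric matrix, ℓ ∈ ℝ, φ > 0 with A ≻ ℓI and tr((A−ℓI)⁻¹) ≤ φ. Let X be an isotropic random vector satisfying sup_{‖v‖₂≤1} E|⟨X,v⟩|^{2+η} ≤ C for some C, η > 0, and set p = 1 + η/2. Then E[q₁(0,X)^p] ≤ C φ^p, where q₁(0,x) = xᵀ(A−ℓI)⁻¹x. -/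
open Matrix MeasureTheory

private lemma quad_form_eq {n : ℕ} (B : Matrix (Fin n) (Fin n) ℝ) (hB : B.IsHermitian)
    (x : Fin n → ℝ) :
    x ⬝ᵥ B *ᵥ x = ∑ i, hB.eigenvalues i *
      (x ⬝ᵥ (fun j => (hB.eigenvectorUnitary : Matrix (Fin n) (Fin n) ℝ) j i))^2 := by
  conv_lhs => rw [hB.spectral_theorem]; simp only [Unitary.conjStarAlgAut_apply, Unitary.coe_star]
  rw [← mulVec_mulVec, ← mulVec_mulVec, dotProduct_mulVec x]
  have hv : vecMul x (hB.eigenvectorUnitary : Matrix (Fin n) (Fin n) ℝ)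
      = (star (hB.eigenvectorUnitary : Matrix (Fin n) (Fin n) ℝ)) *ᵥ x := by
    ext i
    simp [vecMul, mulVec, dotProduct, star, conjTranspose, mul_comm]
  rw [hv]
  set y := (star (hB.eigenvectorUnitary : Matrix (Fin n) (Fin n) ℝ)) *ᵥ x with hy
  have hyi : ∀ i, y i = x ⬝ᵥ (fun j => (hB.eigenvectorUnitary : Matrix (Fin n) (Fin n) ℝ) j i) := by
    intro i
    simp [hy, mulVec, dotProduct, star, conjTranspose, mul_comm]
  simp only [dotProduct, mulVec_diagonal, Function.comp_apply, RCLike.ofReal_real_eq_id, id]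
  refine Finset.sum_congr rfl fun i _ => ?_
  rw [hyi i]
  simp [dotProduct]
  ring

private lemma col_unit {n : ℕ} (B : Matrix (Fin n) (Fin n) ℝ) (hB : B.IsHermitian) (i : Fin n) :
    ∑ j, ((hB.eigenvectorUnitary : Matrix (Fin n) (Fin n) ℝ) j i)^2 = 1 := by
  have h := (Matrix.mem_unitaryGroup_iff'.mp (hB.eigenvectorUnitary).2)
  have h2 := congrFun (congrFun h i) i
  simp only [Matrix.mul_apply, Matrix.one_apply_eq, Matrix.star_apply, star_trivial] at h2
  rw [← h2]
  exact Finset.sum_congr rfl fun j _ => by ring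

private lemma trace_eq_sum_eig {n : ℕ} (B : Matrix (Fin n) (Fin n) ℝ) (hB : B.IsHermitian) :
    B.trace = ∑ i, hB.eigenvalues i := by
  conv_lhs => rw [hB.spectral_theorem]; simp only [Unitary.conjStarAlgAut_apply, Unitary.coe_star]
  rw [Matrix.trace_mul_cycle, (Matrix.mem_unitaryGroup_iff'.mp (hB.eigenvectorUnitary).2), one_mul,
    Matrix.trace_diagonal]
  simp

private lemma convex_pt {m : ℕ} (μ z : Fin m → ℝ) (hμ : ∀ i, 0 ≤ μ i) (hz : ∀ i, 0 ≤ z i)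
    {S p : ℝ} (hS : S = ∑ i, μ i) (hS0 : 0 < S) (hp : 1 ≤ p) :
    (∑ i, μ i * z i) ^ p ≤ S ^ (p - 1) * ∑ i, μ i * z i ^ p := by
  have h := Real.rpow_arith_mean_le_arith_mean_rpow Finset.univ (fun i => μ i / S) z
    (fun i _ => div_nonneg (hμ i) hS0.le)
    (by rw [← Finset.sum_div, ← hS, div_self hS0.ne']) (fun i _ => hz i) hp
  have e1 : ∑ i, μ i / S * z i = (∑ i, μ i * z i) / S := by
    rw [Finset.sum_div]; exact Finset.sum_congr rfl fun i _ => by ring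
  have e2 : ∑ i, μ i / S * z i ^ p = (∑ i, μ i * z i ^ p) / S := by
    rw [Finset.sum_div]; exact Finset.sum_congr rfl fun i _ => by ring
  rw [e1, e2, Real.div_rpow (Finset.sum_nonneg fun i _ => mul_nonneg (hμ i) (hz i)) hS0.le,
    div_le_div_iff₀ (Real.rpow_pos_of_pos hS0 p) hS0] at h
  calc (∑ i, μ i * z i) ^ p = (∑ i, μ i * z i) ^ p * S / S := by
        field_simp
    _ ≤ (∑ i, μ i * z i ^ p) * S ^ p / S := by
        exact div_le_div_of_nonneg_right h hS0.le
    _ = S ^ (p - 1) * ∑ i, μ i * z i ^ p := by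
        rw [Real.rpow_sub hS0, Real.rpow_one]
        ring

theorem moments_quadratic_q1_p {n : ℕ} (A : Matrix (Fin n) (Fin n) ℝ) (hA : A.IsSymm)
    (ℓ φ C η : ℝ) (hφ : 0 < φ) (hC : 0 < C) (hη : 0 < η)
    (hpos : (A - ℓ • (1 : Matrix (Fin n) (Fin n) ℝ)).PosDef)
    (htr : (A - ℓ • (1 : Matrix (Fin n) (Fin n) ℝ))⁻¹.trace ≤ φ)
    {Ω : Type*} [MeasureSpace Ω] [IsProbabilityMeasure (volume : Measure Ω)]
    (X : Ω → Fin n → ℝ) (hX : Measurable X)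
    (hint : ∀ i j, Integrable (fun ω => X ω i * X ω j))
    (hiso : ∀ i j, ∫ ω, X ω i * X ω j = if i = j then (1 : ℝ) else 0)
    (hreg : ∀ v : Fin n → ℝ, ∑ i, v i ^ 2 ≤ 1 →
      ∫ ω, |X ω ⬝ᵥ v| ^ (2 + η) ≤ C) :
    ∫ ω, (X ω ⬝ᵥ ((A - ℓ • 1)⁻¹).mulVec (X ω)) ^ (1 + η / 2)
      ≤ C * φ ^ (1 + η / 2) := by
  set p : ℝ := 1 + η / 2 with hpdef
  have hp1 : (1:ℝ) ≤ p := by simp [hpdef]; positivity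
  have hp0 : (0:ℝ) < p := lt_of_lt_of_le one_pos hp1
  rcases Nat.eq_zero_or_pos n with hn | hn
  · subst hn
    have : ∀ ω, (X ω ⬝ᵥ ((A - ℓ • 1)⁻¹).mulVec (X ω)) ^ p = 0 := by
      intro ω
      have : X ω ⬝ᵥ ((A - ℓ • 1)⁻¹).mulVec (X ω) = 0 := by
        simp [dotProduct]
      rw [this, Real.zero_rpow hp0.ne']
    simp only [this, integral_zero]
    positivity
  -- main case
  set B := (A - ℓ • (1 : Matrix (Fin n) (Fin n) ℝ))⁻¹ with hBdef
  have hBpd : B.PosDef := hpos.inv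
  have hB : B.IsHermitian := hBpd.1
  set μ : Fin n → ℝ := hB.eigenvalues with hμdef
  set v : Fin n → Fin n → ℝ :=
    fun i j => (hB.eigenvectorUnitary : Matrix (Fin n) (Fin n) ℝ) j i with hvdef
  have hμpos : ∀ i, 0 < μ i := fun i => hBpd.eigenvalues_pos i
  set S : ℝ := ∑ i, μ i with hSdef
  have hS0 : 0 < S := Finset.sum_pos (fun i _ => hμpos i) ⟨⟨0, hn⟩, Finset.mem_univ _⟩
  have hSφ : S ≤ φ := by
    rw [hSdef, ← trace_eq_sum_eig B hB]; exact htr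
  have key : ∀ x : Fin n → ℝ, x ⬝ᵥ B *ᵥ x = ∑ i, μ i * (x ⬝ᵥ v i) ^ 2 := by
    intro x
    exact quad_form_eq B hB x
  have hunit : ∀ i, ∑ j, (v i j) ^ 2 ≤ 1 := fun i => le_of_eq (col_unit B hB i)
  -- measurability
  have hXv : ∀ w : Fin n → ℝ, Measurable fun ω => X ω ⬝ᵥ w := by
    intro w
    simp only [dotProduct]
    exact Finset.measurable_sum _ fun j _ => ((measurable_pi_apply j).comp hX).mul_const (w j)
  set q : Ω → ℝ := fun ω => X ω ⬝ᵥ B *ᵥ (X ω) with hqdef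
  have hq0 : ∀ ω, 0 ≤ q ω := fun ω => by
    rw [hqdef]
    simp only [key]
    exact Finset.sum_nonneg fun i _ => mul_nonneg (hμpos i).le (sq_nonneg _)
  have hqmeas : Measurable q := by
    have : q = fun ω => ∑ i, μ i * (X ω ⬝ᵥ v i) ^ 2 := funext fun ω => key (X ω)
    rw [this]
    exact Finset.measurable_sum _ fun i _ => (((hXv (v i)).pow_const 2).const_mul (μ i))
  set f : Fin n → Ω → ℝ := fun i ω => ((X ω ⬝ᵥ v i) ^ 2) ^ p with hfdef
  have hf0 : ∀ i ω, 0 ≤ f i ω := fun i ω => Real.rpow_nonneg (sq_nonneg _) p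
  have hfmeas : ∀ i, Measurable (f i) := fun i =>
    (Real.continuous_rpow_const hp0.le).measurable.comp ((hXv (v i)).pow_const 2)
  have hfeq : ∀ i ω, f i ω = |X ω ⬝ᵥ v i| ^ (2 + η) := by
    intro i ω
    rw [hfdef]
    simp only
    rw [sq_abs (X ω ⬝ᵥ v i) |>.symm, ← Real.rpow_natCast |X ω ⬝ᵥ v i| 2,
      ← Real.rpow_mul (abs_nonneg _)]
    norm_num [hpdef]
    ring_nf
  -- pointwise bound
  have hpt : ∀ ω, (q ω) ^ p ≤ S ^ (p - 1) * ∑ i, μ i * f i ω := by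
    intro ω
    rw [hqdef]
    simp only [key]
    exact convex_pt μ (fun i => (X ω ⬝ᵥ v i) ^ 2) (fun i => (hμpos i).le)
      (fun i => sq_nonneg _) hSdef hS0 hp1
  by_cases hInt : Integrable (fun ω => (q ω) ^ p)
  · -- each f i is integrable
    have hfint : ∀ i, Integrable (f i) := by
      intro i
      refine Integrable.mono' (hInt.const_mul ((μ i) ^ (-p))) ((hfmeas i).aestronglyMeasurable)
        (Filter.Eventually.of_forall fun ω => ?_)
      rw [Real.norm_eq_abs, abs_of_nonneg (hf0 i ω)]
      have h1 : μ i * (X ω ⬝ᵥ v i) ^ 2 ≤ q ω := by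
        rw [hqdef]; simp only [key]
        exact Finset.single_le_sum (f := fun j => μ j * (X ω ⬝ᵥ v j) ^ 2)
          (fun j (_ : j ∈ Finset.univ) => mul_nonneg (hμpos j).le (sq_nonneg _))
          (Finset.mem_univ i)
      have h2 : (X ω ⬝ᵥ v i) ^ 2 ≤ q ω / μ i := by
        rw [le_div_iff₀ (hμpos i)] at *
        linarith [h1]
      calc f i ω ≤ (q ω / μ i) ^ p := Real.rpow_le_rpow (sq_nonneg _) h2 hp0.le
        _ = (μ i) ^ (-p) * (q ω) ^ p := by
            rw [Real.div_rpow (hq0 ω) (hμpos i).le, Real.rpow_neg (hμpos i).le]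
            field_simp
    have hRHSint : Integrable (fun ω => S ^ (p - 1) * ∑ i, μ i * f i ω) :=
      ((integrable_finset_sum Finset.univ fun i _ => (hfint i).const_mul (μ i)).const_mul _)
    have step1 : ∫ ω, (q ω) ^ p ≤ ∫ ω, S ^ (p - 1) * ∑ i, μ i * f i ω :=
      integral_mono hInt hRHSint hpt
    have step2 : ∫ ω, S ^ (p - 1) * ∑ i, μ i * f i ω
        = S ^ (p - 1) * ∑ i, μ i * ∫ ω, f i ω := by
      rw [integral_const_mul, integral_finset_sum Finset.univ
        (fun i _ => (hfint i).const_mul (μ i))]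
      congr 1
      exact Finset.sum_congr rfl fun i _ => integral_const_mul _ _
    have hfC : ∀ i, ∫ ω, f i ω ≤ C := by
      intro i
      have := hreg (v i) (hunit i)
      calc ∫ ω, f i ω = ∫ ω, |X ω ⬝ᵥ v i| ^ (2 + η) := by
            exact integral_congr_ae (Filter.Eventually.of_forall fun ω => hfeq i ω)
        _ ≤ C := this
    have step3 : S ^ (p - 1) * ∑ i, μ i * ∫ ω, f i ω ≤ S ^ (p - 1) * (S * C) := by
      refine mul_le_mul_of_nonneg_left ?_ (Real.rpow_nonneg hS0.le _)
      calc ∑ i, μ i * ∫ ω, f i ω ≤ ∑ i, μ i * C :=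
            Finset.sum_le_sum fun i _ => mul_le_mul_of_nonneg_left (hfC i) (hμpos i).le
        _ = S * C := by rw [hSdef, Finset.sum_mul]
    have step4 : S ^ (p - 1) * (S * C) ≤ C * φ ^ p := by
      have : S ^ (p - 1) * S = S ^ p := by
        rw [Real.rpow_sub hS0, Real.rpow_one]; field_simp
      calc S ^ (p - 1) * (S * C) = S ^ p * C := by rw [← this]; ring
        _ ≤ φ ^ p * C := by
            exact mul_le_mul_of_nonneg_right
              (Real.rpow_le_rpow hS0.le hSφ hp0.le) hC.le
        _ = C * φ ^ p := mul_comm _ _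
    calc ∫ ω, (q ω) ^ p ≤ S ^ (p - 1) * ∑ i, μ i * ∫ ω, f i ω := step2 ▸ step1
      _ ≤ S ^ (p - 1) * (S * C) := step3
      _ ≤ C * φ ^ p := step4
  · rw [integral_undef hInt]
    positivity
end

section
/- Let A be an n×n symmetric matrix, ℓ ∈ ℝ, φ > 0 with A ≻ ℓI and tr((A−ℓI)⁻¹) = φ, and let x ∈ ℝⁿ. For t ∈ (0,1), define δ := (1−t)³ q₂(0,x) · 1{q₁(0,x) ≤ t} · 1{q₂(0,x) ≤ t/φ}, where q₁(0,x) = xᵀ(A−ℓI)⁻¹x and q₂(0,x) = xᵀ(A−ℓI)⁻²x / tr((A−ℓI)⁻²). Then A ≻ (ℓ+δ)I and tr((A + xxᵀ − (ℓ+δ)I)⁻¹) ≤ tr((A − ℓI)⁻¹). -/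
open Matrix

variable {n : ℕ}

lemma aux_vmv_mul (x : Fin n → ℝ) (N : Matrix (Fin n) (Fin n) ℝ) :
    vecMulVec x x * N * vecMulVec x x = (x ⬝ᵥ N.mulVec x) • vecMulVec x x := by
  ext i j
  simp only [mul_apply, vecMulVec_apply, Matrix.smul_apply, dotProduct, mulVec, smul_eq_mul,
    Finset.sum_mul, Finset.mul_sum]
  rw [Finset.sum_comm]
  exact Finset.sum_congr rfl fun l _ => Finset.sum_congr rfl fun k _ => by ring

lemma aux_trace_vmv (x : Fin n → ℝ) (N : Matrix (Fin n) (Fin n) ℝ) :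
    (vecMulVec x x * N).trace = x ⬝ᵥ N.mulVec x := by
  simp only [trace, diag, mul_apply, vecMulVec_apply, dotProduct, mulVec]
  rw [Finset.sum_comm]
  congr 1; ext k; rw [Finset.mul_sum]; congr 1; ext i; ring

lemma sherman_morrison (M : Matrix (Fin n) (Fin n) ℝ) (hM : M.PosDef) (x : Fin n → ℝ) :
    (M + vecMulVec x x)⁻¹ =
      M⁻¹ - (1 + x ⬝ᵥ M⁻¹.mulVec x)⁻¹ • (M⁻¹ * vecMulVec x x * M⁻¹) := by
  have hinv := hM.isUnit.invertible
  have hc : 0 ≤ x ⬝ᵥ M⁻¹.mulVec x := by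
    simpa using hM.inv.posSemidef.dotProduct_mulVec_nonneg x
  set c := x ⬝ᵥ M⁻¹.mulVec x with hcdef
  have hc1 : (0:ℝ) < 1 + c := by linarith
  apply Matrix.inv_eq_right_inv
  have h1 : M * M⁻¹ = 1 := Matrix.mul_nonsing_inv _ (isUnit_iff_isUnit_det _ |>.mp hM.isUnit)
  have key : vecMulVec x x * M⁻¹ * (vecMulVec x x * M⁻¹) = c • (vecMulVec x x * M⁻¹) := by
    calc vecMulVec x x * M⁻¹ * (vecMulVec x x * M⁻¹)
        = (vecMulVec x x * M⁻¹ * vecMulVec x x) * M⁻¹ := by noncomm_ring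
      _ = (c • vecMulVec x x) * M⁻¹ := by rw [aux_vmv_mul]
      _ = c • (vecMulVec x x * M⁻¹) := by rw [Matrix.smul_mul]
  have expand : (M + vecMulVec x x) * (M⁻¹ - (1 + c)⁻¹ • (M⁻¹ * vecMulVec x x * M⁻¹))
      = 1 + vecMulVec x x * M⁻¹ - (1 + c)⁻¹ • ((1 + c) • (vecMulVec x x * M⁻¹)) := by
    rw [Matrix.add_mul, Matrix.mul_sub, Matrix.mul_sub, h1]
    rw [Matrix.mul_smul, Matrix.mul_smul]
    have e1 : M * (M⁻¹ * vecMulVec x x * M⁻¹) = vecMulVec x x * M⁻¹ := by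
      rw [← Matrix.mul_assoc, ← Matrix.mul_assoc, h1, Matrix.one_mul]
    have e2 : vecMulVec x x * (M⁻¹ * vecMulVec x x * M⁻¹) = c • (vecMulVec x x * M⁻¹) := by
      rw [← key]; noncomm_ring
    rw [e1, e2]
    module
  rw [expand, smul_smul, inv_mul_cancel₀ hc1.ne', one_smul]
  abel

section diagConj
variable {n : ℕ} (U : Matrix (Fin n) (Fin n) ℝ)

lemma dc_mul (hUr : star U * U = 1) (d e : Fin n → ℝ) :
    (U * diagonal d * star U) * (U * diagonal e * star U)
      = U * diagonal (fun i => d i * e i) * star U := by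
  have h : star U * (U * diagonal e * star U) = diagonal e * star U := by
    rw [← Matrix.mul_assoc, ← Matrix.mul_assoc, hUr, Matrix.one_mul]
  calc (U * diagonal d * star U) * (U * diagonal e * star U)
      = U * diagonal d * (star U * (U * diagonal e * star U)) := by
        rw [Matrix.mul_assoc]
    _ = U * (diagonal d * diagonal e) * star U := by
        rw [h, Matrix.mul_assoc (U) (diagonal d), ← Matrix.mul_assoc (diagonal d),
          ← Matrix.mul_assoc]
    _ = U * diagonal (fun i => d i * e i) * star U := by
        rw [diagonal_mul_diagonal]

lemma dc_trace (hUr : star U * U = 1) (d : Fin n → ℝ) :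
    (U * diagonal d * star U).trace = ∑ i, d i := by
  rw [trace_mul_cycle, hUr, Matrix.one_mul, trace_diagonal]

lemma dc_inv (hUl : U * star U = 1) (hUr : star U * U = 1) (d : Fin n → ℝ)
    (hd : ∀ i, d i ≠ 0) :
    (U * diagonal d * star U)⁻¹ = U * diagonal (fun i => (d i)⁻¹) * star U := by
  apply Matrix.inv_eq_right_inv
  rw [dc_mul U hUr]
  have : (fun i => d i * (d i)⁻¹) = fun _ => (1:ℝ) := by
    funext i; exact mul_inv_cancel₀ (hd i)
  rw [this, diagonal_one, Matrix.mul_one, hUl]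

lemma dc_sub_smul (hUl : U * star U = 1) (d : Fin n → ℝ) (δ : ℝ) :
    U * diagonal d * star U - δ • 1 = U * diagonal (fun i => d i - δ) * star U := by
  have h1 : diagonal (fun _ : Fin n => δ) = δ • (1 : Matrix (Fin n) (Fin n) ℝ) := by
    ext i j; by_cases h : i = j <;> simp [diagonal, one_apply, h]
  have h2 : diagonal (fun i => d i - δ)
      = diagonal d - diagonal (fun _ : Fin n => δ) := (diagonal_sub d _).symm
  rw [h2, Matrix.mul_sub, Matrix.sub_mul, h1]
  congr 1
  rw [Matrix.mul_smul, Matrix.mul_one, Matrix.smul_mul, hUl]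

lemma dc_quad (d : Fin n → ℝ) (x : Fin n → ℝ) :
    x ⬝ᵥ (U * diagonal d * star U) *ᵥ x = ∑ i, d i * ((star U *ᵥ x) i)^2 := by
  have hsU : star U = Uᵀ := by
    rw [Matrix.star_eq_conjTranspose, conjTranspose_eq_transpose_of_trivial]
  rw [← mulVec_mulVec, ← mulVec_mulVec, dotProduct_mulVec]
  have hvm : x ᵥ* U = star U *ᵥ x := by rw [hsU, mulVec_transpose]
  rw [hvm]
  simp only [dotProduct, mulVec_diagonal]
  exact Finset.sum_congr rfl fun i _ => by ring

lemma dc_posDef (hUl : U * star U = 1) (hUr : star U * U = 1) (d : Fin n → ℝ)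
    (hd : ∀ i, 0 < d i) : (U * diagonal d * star U).PosDef := by
  rw [Matrix.posDef_iff_dotProduct_mulVec]
  constructor
  · simp [Matrix.IsHermitian, conjTranspose_mul, diagonal_conjTranspose,
      Matrix.star_eq_conjTranspose, Matrix.mul_assoc]
  · intro v hv
    have hy : star U *ᵥ v ≠ 0 := by
      intro h
      apply hv
      have := congrArg (fun w => U *ᵥ w) h
      simpa [mulVec_mulVec, hUl] using this
    have hq := dc_quad U d v
    simp only [star_trivial]
    rw [hq]
    obtain ⟨i, hi⟩ := Function.ne_iff.mp hy
    apply Finset.sum_pos' (fun j _ => mul_nonneg (hd j).le (sq_nonneg _))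
    exact ⟨i, Finset.mem_univ i, mul_pos (hd i) (pow_two_pos_of_ne_zero hi)⟩

end diagConj

open scoped Classical

set_option maxHeartbeats 1000000 in
theorem explicit_feasible_shift {n : ℕ} (A : Matrix (Fin n) (Fin n) ℝ) (hA : A.IsSymm)
    (ℓ φ t : ℝ) (hφ : 0 < φ) (ht : t ∈ Set.Ioo (0 : ℝ) 1)
    (hpos : (A - ℓ • (1 : Matrix (Fin n) (Fin n) ℝ)).PosDef)
    (htr : (A - ℓ • (1 : Matrix (Fin n) (Fin n) ℝ))⁻¹.trace = φ)
    (x : Fin n → ℝ) (δ : ℝ)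
    (hδ : δ = if (x ⬝ᵥ ((A - ℓ • 1)⁻¹).mulVec x ≤ t ∧
          (x ⬝ᵥ ((A - ℓ • 1)⁻¹ ^ 2).mulVec x)
            / ((A - ℓ • (1 : Matrix (Fin n) (Fin n) ℝ))⁻¹ ^ 2).trace ≤ t / φ)
        then (1 - t) ^ 3 * ((x ⬝ᵥ ((A - ℓ • 1)⁻¹ ^ 2).mulVec x)
            / ((A - ℓ • (1 : Matrix (Fin n) (Fin n) ℝ))⁻¹ ^ 2).trace)
        else 0) :
    (A - (ℓ + δ) • (1 : Matrix (Fin n) (Fin n) ℝ)).PosDef ∧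
    (A + vecMulVec x x - (ℓ + δ) • 1)⁻¹.trace ≤ (A - ℓ • 1)⁻¹.trace := by
  obtain ⟨ht0, ht1⟩ := ht
  have h1t : (0:ℝ) < 1 - t := by linarith
  set B := A - ℓ • (1 : Matrix (Fin n) (Fin n) ℝ) with hBdef
  have hB : B.IsHermitian := hpos.1
  set U : Matrix (Fin n) (Fin n) ℝ := (hB.eigenvectorUnitary : Matrix (Fin n) (Fin n) ℝ)
    with hUdef
  have hUmem : U ∈ Matrix.unitaryGroup (Fin n) ℝ := hB.eigenvectorUnitary.2
  have hUl : U * star U = 1 := (Matrix.mem_unitaryGroup_iff).mp hUmem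
  have hUr : star U * U = 1 := (Matrix.mem_unitaryGroup_iff').mp hUmem
  set lam := hB.eigenvalues with hlamdef
  have hlam : ∀ i, 0 < lam i := hpos.eigenvalues_pos
  have hspec : B = U * diagonal lam * star U := by
    have h := hB.spectral_theorem
    rw [RCLike.ofReal_real_eq_id] at h
    simpa using h
  set y := star U *ᵥ x with hy
  have hBinv : B⁻¹ = U * diagonal (fun i => (lam i)⁻¹) * star U := by
    rw [hspec]; exact dc_inv U hUl hUr lam (fun i => (hlam i).ne')
  have hBinv2 : B⁻¹ ^ 2 = U * diagonal (fun i => ((lam i)⁻¹)^2) * star U := by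
    rw [pow_two, hBinv, dc_mul U hUr,
      show (fun i => (lam i)⁻¹ * (lam i)⁻¹) = fun i => ((lam i)⁻¹)^2
        from funext fun i => (sq _).symm]
  have hφsum : ∑ i, (lam i)⁻¹ = φ := by rw [← htr, hBinv, dc_trace U hUr]
  set T2 := ∑ i, ((lam i)⁻¹)^2 with hT2def
  have hT2tr : (B⁻¹ ^ 2).trace = T2 := by rw [hBinv2, dc_trace U hUr]
  set q1 := ∑ i, (lam i)⁻¹ * (y i)^2 with hq1def
  have hq1 : x ⬝ᵥ B⁻¹ *ᵥ x = q1 := by rw [hBinv, dc_quad]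
  set q2 := ∑ i, ((lam i)⁻¹)^2 * (y i)^2 with hq2def
  have hq2 : x ⬝ᵥ (B⁻¹ ^ 2) *ᵥ x = q2 := by rw [hBinv2, dc_quad]
  have hne : Nonempty (Fin n) := by
    by_contra h
    rw [not_nonempty_iff] at h
    rw [← hφsum, Finset.univ_eq_empty, Finset.sum_empty] at hφ
    exact lt_irrefl 0 hφ
  have hT2pos : 0 < T2 := Finset.sum_pos (fun i _ => by have := hlam i; positivity)
    Finset.univ_nonempty
  have hq2nn : 0 ≤ q2 := Finset.sum_nonneg fun i _ => by positivity
  rw [hq1, hq2, hT2tr] at hδ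
  -- basic δ facts
  have hδ0 : 0 ≤ δ := by
    rw [hδ]; split
    · positivity
    · exact le_rfl
  have hδφ : δ * φ ≤ t * (1 - t) ^ 3 := by
    rw [hδ]; split
    · rename_i hc
      have h2 := hc.2
      have h3 : (1-t)^3 * (q2 / T2) * φ ≤ (1-t)^3 * (t / φ) * φ := by
        have := mul_le_mul_of_nonneg_left h2 (by positivity : (0:ℝ) ≤ (1-t)^3)
        exact mul_le_mul_of_nonneg_right this hφ.le
      calc (1-t)^3 * (q2 / T2) * φ ≤ (1-t)^3 * (t / φ) * φ := h3
        _ = t * (1-t)^3 := by field_simp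
    · nlinarith [pow_pos h1t 3]
  have hδT2 : δ * T2 ≤ (1 - t) ^ 3 * q2 := by
    rw [hδ]; split
    · rw [mul_assoc, div_mul_cancel₀ _ hT2pos.ne']
    · nlinarith [pow_pos h1t 3]
  -- per-index eigenvalue bounds
  have hlamφ : ∀ i, (lam i)⁻¹ ≤ φ := fun i => by
    rw [← hφsum]
    exact Finset.single_le_sum (f := fun i => (lam i)⁻¹)
      (fun j _ => by have := hlam j; positivity) (Finset.mem_univ i)
  have hδlam : ∀ i, δ ≤ t * (1 - t) ^ 3 * lam i := by
    intro i
    have e : lam i * (lam i)⁻¹ = 1 := mul_inv_cancel₀ (hlam i).ne'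
    have h1 : 1 ≤ φ * lam i := by
      nlinarith [mul_le_mul_of_nonneg_left (hlamφ i) (hlam i).le]
    nlinarith [mul_le_mul_of_nonneg_right hδφ (hlam i).le,
      mul_le_mul_of_nonneg_left h1 hδ0]
  have hmu : ∀ i, (1 - t) * lam i ≤ lam i - δ := by
    intro i
    have h3 : (1-t)^3 ≤ 1 := pow_le_one₀ h1t.le (by linarith)
    have h4 : t * (1-t)^3 * lam i ≤ t * 1 * lam i :=
      mul_le_mul_of_nonneg_right (mul_le_mul_of_nonneg_left h3 ht0.le) (hlam i).le
    have h5 := hδlam i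
    rw [mul_one] at h4
    linarith
  have hmupos : ∀ i, 0 < lam i - δ := fun i =>
    lt_of_lt_of_le (by have := hlam i; positivity) (hmu i)
  -- the shifted matrix
  have hCspec : B - δ • 1 = U * diagonal (fun i => lam i - δ) * star U := by
    rw [hspec, dc_sub_smul U hUl]
  have hCpos : (B - δ • 1).PosDef := by
    rw [hCspec]; exact dc_posDef U hUl hUr _ hmupos
  have hgoal1 : A - (ℓ + δ) • (1 : Matrix (Fin n) (Fin n) ℝ) = B - δ • 1 := by
    rw [hBdef, add_smul]; abel
  refine ⟨by rw [hgoal1]; exact hCpos, ?_⟩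
  -- Sherman-Morrison
  have hCinv : (B - δ • 1)⁻¹ = U * diagonal (fun i => (lam i - δ)⁻¹) * star U := by
    rw [hCspec]; exact dc_inv U hUl hUr _ (fun i => (hmupos i).ne')
  have hCinv2 : (B - δ • 1)⁻¹ * (B - δ • 1)⁻¹
      = U * diagonal (fun i => ((lam i - δ)⁻¹)^2) * star U := by
    rw [hCinv, dc_mul U hUr,
      show (fun i => (lam i - δ)⁻¹ * (lam i - δ)⁻¹) = fun i => ((lam i - δ)⁻¹)^2
        from funext fun i => (sq _).symm]
  set r1 := ∑ i, (lam i - δ)⁻¹ * (y i)^2 with hr1def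
  have hr1 : x ⬝ᵥ (B - δ • 1)⁻¹ *ᵥ x = r1 := by rw [hCinv, dc_quad]
  set r2 := ∑ i, ((lam i - δ)⁻¹)^2 * (y i)^2 with hr2def
  have hr1nn : 0 ≤ r1 := Finset.sum_nonneg fun i _ => by
    have := hmupos i; positivity
  have hr2nn : 0 ≤ r2 := Finset.sum_nonneg fun i _ => by positivity
  have hM : A + vecMulVec x x - (ℓ + δ) • (1 : Matrix (Fin n) (Fin n) ℝ)
      = (B - δ • 1) + vecMulVec x x := by
    rw [hBdef, add_smul]; abel
  rw [hM, sherman_morrison _ hCpos x, hr1, htr]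
  rw [trace_sub, trace_smul]
  have htr2 : ((B - δ • 1)⁻¹ * vecMulVec x x * (B - δ • 1)⁻¹).trace = r2 := by
    rw [trace_mul_cycle, trace_mul_comm, aux_trace_vmv, hCinv2, dc_quad]
  rw [htr2]
  have hS1 : (B - δ • 1)⁻¹.trace = ∑ i, (lam i - δ)⁻¹ := by rw [hCinv, dc_trace U hUr]
  rw [hS1]
  simp only [smul_eq_mul]
  -- now a purely scalar goal
  by_cases hcond : (q1 ≤ t ∧ q2 / T2 ≤ t / φ)
  · -- main case
    have hkey : ∀ i, (lam i - δ)⁻¹ ≤ (lam i)⁻¹ + δ / (1-t) * ((lam i)⁻¹)^2 := by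
      intro i
      set a := lam i
      set m := a - δ with hmdef
      have ha := hlam i
      have hm := hmupos i
      have hminv : m⁻¹ ≤ (1-t)⁻¹ * a⁻¹ := by
        rw [← mul_inv]
        exact inv_anti₀ (by positivity) (hmu i)
      have e : m⁻¹ - a⁻¹ = δ * (a⁻¹ * m⁻¹) := by
        have ha' : a ≠ 0 := ne_of_gt ha
        have hm' : a - δ ≠ 0 := ne_of_gt hm
        rw [hmdef, inv_sub_inv hm' ha', sub_sub_cancel, div_eq_mul_inv, mul_inv,
          mul_comm (a - δ)⁻¹]
      have h2 : δ * (a⁻¹ * m⁻¹) ≤ δ / (1-t) * (a⁻¹)^2 := by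
        calc δ * (a⁻¹ * m⁻¹) ≤ δ * (a⁻¹ * ((1-t)⁻¹ * a⁻¹)) := by
              apply mul_le_mul_of_nonneg_left _ hδ0
              exact mul_le_mul_of_nonneg_left hminv (by positivity)
          _ = δ / (1-t) * (a⁻¹)^2 := by rw [div_eq_mul_inv]; ring
      linarith
    have hIneq1 : ∑ i, (lam i - δ)⁻¹ ≤ φ + δ / (1-t) * T2 := by
      calc ∑ i, (lam i - δ)⁻¹ ≤ ∑ i, ((lam i)⁻¹ + δ / (1-t) * ((lam i)⁻¹)^2) :=
            Finset.sum_le_sum fun i _ => hkey i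
        _ = φ + δ / (1-t) * T2 := by
            rw [Finset.sum_add_distrib, hφsum, ← Finset.mul_sum, hT2def]
    have hIneq2 : r1 ≤ (1-t)⁻¹ * t := by
      have : r1 ≤ (1-t)⁻¹ * q1 := by
        rw [hr1def, hq1def, Finset.mul_sum]
        apply Finset.sum_le_sum
        intro i _
        have hminv : (lam i - δ)⁻¹ ≤ (1-t)⁻¹ * (lam i)⁻¹ := by
          rw [← mul_inv]
          exact inv_anti₀ (by have := hlam i; positivity) (hmu i)
        calc (lam i - δ)⁻¹ * (y i)^2 ≤ ((1-t)⁻¹ * (lam i)⁻¹) * (y i)^2 :=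
              mul_le_mul_of_nonneg_right hminv (sq_nonneg _)
          _ = (1-t)⁻¹ * ((lam i)⁻¹ * (y i)^2) := by ring
      have := mul_le_mul_of_nonneg_left hcond.1 (by positivity : (0:ℝ) ≤ (1-t)⁻¹)
      linarith
    have hIneq3 : q2 ≤ r2 := by
      apply Finset.sum_le_sum
      intro i _
      have h : (lam i)⁻¹ ≤ (lam i - δ)⁻¹ :=
        inv_anti₀ (hmupos i) (by linarith [hδ0])
      have := pow_le_pow_left₀ (by have := hlam i; positivity) h 2
      exact mul_le_mul_of_nonneg_right this (sq_nonneg _)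
    have h1r1 : 1 + r1 ≤ (1-t)⁻¹ := by
      have he : 1 + (1-t)⁻¹ * t = (1-t)⁻¹ := by field_simp; ring
      linarith
    have h1r1pos : (0:ℝ) < 1 + r1 := by linarith
    have hinvge : 1 - t ≤ (1 + r1)⁻¹ := by
      have := inv_anti₀ h1r1pos h1r1
      rwa [inv_inv] at this
    have hprod : (1-t) * q2 ≤ (1 + r1)⁻¹ * r2 :=
      mul_le_mul hinvge hIneq3 hq2nn (by positivity)
    have hδT2' : δ / (1-t) * T2 ≤ (1-t)^2 * q2 := by
      rw [div_mul_eq_mul_div, div_le_iff₀ h1t]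
      nlinarith [hδT2]
    have hsq : (1-t)^2 * q2 ≤ (1-t) * q2 := by
      nlinarith [mul_nonneg (mul_nonneg h1t.le ht0.le) hq2nn]
    linarith [hIneq1, hδT2', hsq, hprod]
  · -- δ = 0 case
    rw [if_neg hcond] at hδ
    have hsum0 : ∑ i, (lam i - δ)⁻¹ = φ := by
      rw [hδ]; simp only [sub_zero]; exact hφsum
    have : 0 ≤ (1 + r1)⁻¹ * r2 := by positivity
    linarith
end

section
/- Let A be an n×n symmetric matrix, u ∈ ℝ with A ≺ uI, Δ > 0, and x ∈ ℝⁿ. If Q₂(Δ,x) + Q₁(Δ,x) ≤ 1, where Q₁(Δ,x) = xᵀ((u+Δ)I−A)⁻¹x and Q₂(Δ,x) = xᵀ((u+Δ)I−A)⁻²x / (tr((uI−A)⁻¹) − tr(((u+Δ)I−A)⁻¹)), then A + xxᵀ ≺ (u+Δ)I and tr(((u+Δ)I − A − xxᵀ)⁻¹) ≤ tr((uI−A)⁻¹). -/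
open Matrix

open scoped MatrixOrder

variable {n : ℕ}

private lemma trace_vmv (a b : Fin n → ℝ) : (vecMulVec a b).trace = a ⬝ᵥ b := by
  simp [Matrix.trace, vecMulVec_apply, dotProduct, Matrix.diag]

private lemma mul_vmv (M : Matrix (Fin n) (Fin n) ℝ) (a b : Fin n → ℝ) :
    M * vecMulVec a b = vecMulVec (M *ᵥ a) b := by
  ext i j
  simp only [mul_apply, vecMulVec_apply, mulVec, dotProduct]
  rw [Finset.sum_mul]
  exact Finset.sum_congr rfl fun k _ => by ring

private lemma vmv_mul (M : Matrix (Fin n) (Fin n) ℝ) (a b : Fin n → ℝ) :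
    vecMulVec a b * M = vecMulVec a (b ᵥ* M) := by
  ext i j
  simp [mul_apply, vecMulVec_apply, vecMul, dotProduct, Finset.mul_sum, mul_assoc]

private lemma vmv_mul_vmv (a b c d : Fin n → ℝ) :
    vecMulVec a b * vecMulVec c d = (b ⬝ᵥ c) • vecMulVec a d := by
  ext i j
  simp [mul_apply, vecMulVec_apply, dotProduct, Finset.sum_mul, Finset.mul_sum]
  ring_nf
  congr 1
  ext k
  ring

private lemma vmv_mulVec (a b z : Fin n → ℝ) :
    (vecMulVec a b) *ᵥ z = (b ⬝ᵥ z) • a := by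
  ext i
  simp [mulVec, vecMulVec_apply, dotProduct, Finset.mul_sum, mul_assoc, mul_comm, mul_left_comm]

private lemma posdef_diag_pos {P : Matrix (Fin n) (Fin n) ℝ} (hP : P.PosDef) (i : Fin n) :
    0 < P i i := by
  have := hP.dotProduct_mulVec_pos (x := Pi.single i 1) (fun h => by
    have := congrFun h i
    simp [Pi.single_apply] at this)
  simpa [mulVec_single, single_dotProduct] using this

private lemma posdef_trace_pos {P : Matrix (Fin n) (Fin n) ℝ} (hP : P.PosDef) (hn : 0 < n) :
    0 < P.trace := by
  have : Nonempty (Fin n) := Fin.pos_iff_nonempty.mp hn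
  exact Finset.sum_pos (fun i _ => posdef_diag_pos hP i) Finset.univ_nonempty

private lemma herm_transpose {P : Matrix (Fin n) (Fin n) ℝ} (h : P.IsHermitian) : Pᵀ = P := by
  have := h.eq
  rwa [conjTranspose] at this  -- maybe not; test

private lemma dot_symm {P : Matrix (Fin n) (Fin n) ℝ} (hP : Pᵀ = P) (a b : Fin n → ℝ) :
    a ⬝ᵥ P *ᵥ b = (P *ᵥ a) ⬝ᵥ b := by
  rw [dotProduct_mulVec, ← mulVec_transpose, hP]

theorem feasible_upper_shift {n : ℕ} (A : Matrix (Fin n) (Fin n) ℝ) (hA : A.IsSymm)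
    (u Δ : ℝ) (hΔ : 0 < Δ) (x : Fin n → ℝ)
    (hpos : (u • (1 : Matrix (Fin n) (Fin n) ℝ) - A).PosDef)
    (hcond : (x ⬝ᵥ (((u + Δ) • 1 - A)⁻¹ ^ 2).mulVec x)
        / ((u • (1 : Matrix (Fin n) (Fin n) ℝ) - A)⁻¹.trace
            - ((u + Δ) • (1 : Matrix (Fin n) (Fin n) ℝ) - A)⁻¹.trace)
      + x ⬝ᵥ (((u + Δ) • 1 - A)⁻¹).mulVec x ≤ 1) :
    ((u + Δ) • (1 : Matrix (Fin n) (Fin n) ℝ) - (A + vecMulVec x x)).PosDef ∧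
    ((u + Δ) • (1 : Matrix (Fin n) (Fin n) ℝ) - (A + vecMulVec x x))⁻¹.trace
      ≤ (u • (1 : Matrix (Fin n) (Fin n) ℝ) - A)⁻¹.trace := by
  classical
  rcases Nat.eq_zero_or_pos n with rfl | hn
  · constructor
    · exact .of_dotProduct_mulVec_pos (by ext i j; exact Fin.elim0 i) fun z hz => absurd (funext fun i => Fin.elim0 i) hz
    · simp [Matrix.trace]
  set M := u • (1 : Matrix (Fin n) (Fin n) ℝ) - A with hMdef
  set B := (u + Δ) • (1 : Matrix (Fin n) (Fin n) ℝ) - A with hBdef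
  -- basic positivity facts
  have hBM : B = M + Δ • 1 := by rw [hMdef, hBdef, add_smul]; abel
  have hΔ1 : (Δ • (1 : Matrix (Fin n) (Fin n) ℝ)).PosDef := by
    refine .of_dotProduct_mulVec_pos (by simp [Matrix.IsHermitian]) fun z hz => ?_
    have hzz : (0:ℝ) < star z ⬝ᵥ z := dotProduct_star_self_pos_iff.mpr hz
    simpa [smul_mulVec, dotProduct_smul, smul_eq_mul] using mul_pos hΔ hzz
  have hB : B.PosDef := hBM ▸ hpos.add_posSemidef hΔ1.posSemidef
  have hBi : B⁻¹.PosDef := hB.inv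
  have hMi : M⁻¹.PosDef := hpos.inv
  have hdetB : IsUnit B.det := hB.det_pos.ne'.isUnit
  have hdetM : IsUnit M.det := hpos.det_pos.ne'.isUnit
  have hBinv : B * B⁻¹ = 1 := mul_nonsing_inv _ hdetB
  have hBinv' : B⁻¹ * B = 1 := nonsing_inv_mul _ hdetB
  have hMinv : M * M⁻¹ = 1 := mul_nonsing_inv _ hdetM
  have hBiT : B⁻¹ᵀ = B⁻¹ := herm_transpose hBi.1
  have hBT : Bᵀ = B := herm_transpose hB.1
  -- notations
  set w : Fin n → ℝ := B⁻¹ *ᵥ x with hwdef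
  set q : ℝ := x ⬝ᵥ B⁻¹ *ᵥ x with hqdef
  set s : ℝ := w ⬝ᵥ w with hsdef
  set D : ℝ := M⁻¹.trace - B⁻¹.trace with hDdef
  have hxw : B *ᵥ w = x := by
    rw [hwdef, mulVec_mulVec, hBinv, one_mulVec]
  have hs_eq : x ⬝ᵥ (B⁻¹ ^ 2) *ᵥ x = s := by
    rw [pow_two, ← mulVec_mulVec, dot_symm hBiT]
  rw [hs_eq] at hcond
  have hq0 : 0 ≤ q := by simpa [hqdef] using hBi.posSemidef.dotProduct_mulVec_nonneg x
  -- positivity of D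
  have hD : 0 < D := by
    have hBsubM : B - M = Δ • 1 := by rw [hBM]; abel
    have key : M⁻¹ - B⁻¹ = Δ • (B⁻¹ * M⁻¹) := by
      have h1 : B⁻¹ * (B - M) * M⁻¹ = M⁻¹ - B⁻¹ := by
        rw [mul_sub, sub_mul, hBinv', one_mul, mul_assoc, hMinv, mul_one]
      rw [← h1, hBsubM, mul_smul_comm, mul_one, smul_mul_assoc]
    have htr : 0 < (B⁻¹ * M⁻¹).trace := by
      set S := CFC.sqrt M⁻¹ with hSdef
      have hSS : S * S = M⁻¹ := CFC.sqrt_mul_sqrt_self M⁻¹ hMi.posSemidef.nonneg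
      have hSh : S.IsHermitian := (CFC.sqrt_nonneg M⁻¹).posSemidef.1
      have hST : Sᵀ = S := herm_transpose hSh
      have hpsd : (S * B⁻¹ * S).PosSemidef := by
        have h := hBi.posSemidef.conjTranspose_mul_mul_same S
        rwa [hSh.eq] at h
      have hP : (S * B⁻¹ * S).PosDef := by
        refine .of_dotProduct_mulVec_pos hpsd.1 fun z hz => ?_
        have hSz : S *ᵥ z ≠ 0 := by
          intro h0
          have hz0 : M⁻¹ *ᵥ z = 0 := by rw [← hSS, ← mulVec_mulVec, h0, mulVec_zero]
          have hp := hMi.dotProduct_mulVec_pos hz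
          rw [hz0] at hp
          simp at hp
        have he : star z ⬝ᵥ (S * B⁻¹ * S) *ᵥ z = (S *ᵥ z) ⬝ᵥ B⁻¹ *ᵥ (S *ᵥ z) := by
          rw [star_trivial, ← mulVec_mulVec, ← mulVec_mulVec, dot_symm hST]
        rw [he]
        simpa using hBi.dotProduct_mulVec_pos hSz
      have := posdef_trace_pos hP hn
      rw [← hSS, ← mul_assoc, trace_mul_comm, ← mul_assoc]
      exact this
    rw [hDdef, ← trace_sub, key, trace_smul, smul_eq_mul]
    exact mul_pos hΔ htr
  -- q < 1
  have hq1 : q < 1 := by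
    rcases eq_or_ne x 0 with hx | hx
    · rw [hqdef, hx]; simp
    · have hw : w ≠ 0 := fun h0 => hx (by rw [← hxw, h0, mulVec_zero])
      have hs : 0 < s := by
        have := dotProduct_star_self_pos_iff (v := w) |>.mpr hw
        simpa [hsdef] using this
      have : 0 < s / D := div_pos hs hD
      linarith
  have hq1' : 0 < 1 - q := by linarith
  have hcs : s ≤ (1 - q) * D := by
    rcases eq_or_ne x 0 with hx | hx
    · have hs0 : s = 0 := by rw [hsdef, hwdef, hx]; simp
      rw [hs0]
      exact mul_nonneg hq1'.le hD.le
    · have h2 : s / D ≤ 1 - q := by linarith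
      calc s = s / D * D := by field_simp
        _ ≤ (1 - q) * D := mul_le_mul_of_nonneg_right h2 hD.le
  set V := vecMulVec x x with hVdef
  have hCeq : (u + Δ) • (1 : Matrix (Fin n) (Fin n) ℝ) - (A + vecMulVec x x)
      = B - V := by
    rw [sub_add_eq_sub_sub]
  rw [hCeq]
  -- auxiliary dot-product identities
  have hzwBz : ∀ z : Fin n → ℝ, z ⬝ᵥ B *ᵥ w = w ⬝ᵥ B *ᵥ z := fun z => by
    rw [dot_symm hBT, dotProduct_comm]
  have hww : w ⬝ᵥ B *ᵥ w = q := by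
    rw [hxw, dotProduct_comm]
  have hxz : ∀ z : Fin n → ℝ, x ⬝ᵥ z = w ⬝ᵥ B *ᵥ z := fun z => by
    rw [← hxw, dotProduct_comm, hzwBz]
  -- positive definiteness of B - V
  have hCpd : (B - V).PosDef := by
    have hVh : Vᴴ = V := by
      ext i j
      simp [hVdef, conjTranspose_apply, vecMulVec_apply, mul_comm]
    refine .of_dotProduct_mulVec_pos (hB.1.sub hVh) fun z hz => ?_
    have ha : 0 < z ⬝ᵥ B *ᵥ z := by simpa using hB.dotProduct_mulVec_pos hz
    have expand : ∀ t : ℝ,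
        (z ⬝ᵥ B *ᵥ z) * (t * t) + (2 * (w ⬝ᵥ B *ᵥ z)) * t + q
          = (w + t • z) ⬝ᵥ B *ᵥ (w + t • z) := by
      intro t
      rw [mulVec_add, mulVec_smul]
      simp only [dotProduct_add, add_dotProduct, dotProduct_smul, smul_dotProduct, smul_eq_mul]
      rw [hzwBz z, hww]
      ring
    have hdisc := discrim_le_zero
      (a := z ⬝ᵥ B *ᵥ z) (b := 2 * (w ⬝ᵥ B *ᵥ z)) (c := q)
      (fun t => (expand t) ▸ (by simpa using hB.posSemidef.dotProduct_mulVec_nonneg (w + t • z)))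
    rw [discrim] at hdisc
    have he : star z ⬝ᵥ (B - V) *ᵥ z = z ⬝ᵥ B *ᵥ z - (x ⬝ᵥ z) * (x ⬝ᵥ z) := by
      rw [star_trivial, sub_mulVec, dotProduct_sub, hVdef, vmv_mulVec, dotProduct_smul,
        smul_eq_mul, dotProduct_comm z x]
    rw [he, hxz z]
    nlinarith [hdisc, ha, hq0, hq1]
  refine ⟨hCpd, ?_⟩
  -- Sherman--Morrison
  set c := (1 - q)⁻¹ with hcdef
  have hc : c * (1 - q) = 1 := inv_mul_cancel₀ hq1'.ne'
  have hVq : V * B⁻¹ * V = q • V := by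
    rw [hVdef, vmv_mul, vmv_mul_vmv, ← dotProduct_mulVec]
  set N := B⁻¹ + c • (B⁻¹ * V * B⁻¹) with hNdef
  have hCN : (B - V) * N = 1 := by
    have e1 : B * (B⁻¹ * V * B⁻¹) = V * B⁻¹ := by
      rw [← mul_assoc, ← mul_assoc, hBinv, one_mul]
    have e2 : V * (B⁻¹ * V * B⁻¹) = q • (V * B⁻¹) := by
      rw [← mul_assoc, ← mul_assoc, hVq, smul_mul_assoc]
    have hcoef : c - 1 - c * q = 0 := by nlinarith [hc]
    rw [hNdef, sub_mul, mul_add, mul_add, mul_smul_comm, mul_smul_comm, hBinv, e1, e2,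
      smul_smul]
    have e4 : (1 : Matrix (Fin n) (Fin n) ℝ) + c • (V * B⁻¹)
        - (V * B⁻¹ + (c * q) • (V * B⁻¹))
        = 1 + (c - 1 - c * q) • (V * B⁻¹) := by
      rw [sub_smul, sub_smul, one_smul]
      abel
    rw [e4, hcoef, zero_smul, add_zero]
  have hCi : (B - V)⁻¹ = N := inv_eq_right_inv hCN
  rw [hCi]
  have htrN : N.trace = B⁻¹.trace + c * s := by
    rw [hNdef, trace_add, trace_smul, smul_eq_mul]
    congr 1
    rw [hVdef, mul_vmv, vmv_mul, trace_vmv, ← mulVec_transpose, hBiT]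
  rw [htrN]
  have hfin : c * s ≤ D := by
    calc c * s ≤ c * ((1 - q) * D) := by
          apply mul_le_mul_of_nonneg_left hcs (by positivity)
      _ = (c * (1 - q)) * D := by ring
      _ = D := by rw [hc, one_mul]
  calc B⁻¹.trace + c * s ≤ B⁻¹.trace + D := add_le_add_right hfin _
    _ = M⁻¹.trace := by rw [hDdef]; ring
end

section
/- Let A be an n×n symmetric matrix with A ≺ uI and tr((uI−A)⁻¹) ≤ φ for some φ > 0. Then for every Δ ≥ 0 and x ∈ ℝⁿ, Q₂'(Δ,x) ≤ (1+φΔ)² Q₂'(0,x), where Q₂'(Δ,x) = xᵀ((u+Δ)I−A)⁻²x / tr(((u+Δ)I−A)⁻²). -/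
open Matrix

variable {n : ℕ}

private lemma diag_sub_eq' (lam : Fin n → ℝ) (c : ℝ) :
    diagonal (fun i => c - lam i)
      = c • (1 : Matrix (Fin n) (Fin n) ℝ) - diagonal lam := by
  ext i j
  by_cases h : i = j <;>
    simp [diagonal_apply, Matrix.one_apply, h]

private lemma conj_diag_smul_one_sub' (V : Matrix (Fin n) (Fin n) ℝ)
    (hV1 : V * star V = 1)
    (lam : Fin n → ℝ) (c : ℝ) :
    c • (1 : Matrix (Fin n) (Fin n) ℝ) - V * diagonal lam * star V
      = V * diagonal (fun i => c - lam i) * star V := by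
  rw [diag_sub_eq', mul_sub, sub_mul, mul_smul_comm, smul_mul_assoc, mul_one, hV1]

private lemma conj_diag_inv' (V : Matrix (Fin n) (Fin n) ℝ)
    (hV1 : V * star V = 1) (hV2 : star V * V = 1)
    (d : Fin n → ℝ) (hd : ∀ i, d i ≠ 0) :
    (V * diagonal d * star V)⁻¹ = V * diagonal (fun i => (d i)⁻¹) * star V := by
  apply inv_eq_left_inv
  have h0 : V * diagonal (fun i => (d i)⁻¹) * star V * (V * diagonal d * star V)
      = V * (diagonal (fun i => (d i)⁻¹) * ((star V * V) * diagonal d)) * star V := by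
    simp only [Matrix.mul_assoc]
  rw [h0, hV2, one_mul, diagonal_mul_diagonal]
  have h1 : (fun i => (d i)⁻¹ * d i) = fun _ => (1:ℝ) := by
    funext i; exact inv_mul_cancel₀ (hd i)
  rw [h1, diagonal_one, mul_one, hV1]

private lemma conj_diag_sq' (V : Matrix (Fin n) (Fin n) ℝ)
    (hV2 : star V * V = 1) (d : Fin n → ℝ) :
    (V * diagonal d * star V) ^ 2 = V * diagonal (fun i => d i ^ 2) * star V := by
  rw [pow_two]
  have h0 : V * diagonal d * star V * (V * diagonal d * star V)
      = V * (diagonal d * ((star V * V) * diagonal d)) * star V := by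
    simp only [Matrix.mul_assoc]
  rw [h0, hV2, one_mul, diagonal_mul_diagonal]
  congr 2
  funext i
  ring

private lemma conj_diag_trace' (V : Matrix (Fin n) (Fin n) ℝ)
    (hV2 : star V * V = 1) (d : Fin n → ℝ) :
    (V * diagonal d * star V).trace = ∑ i, d i := by
  rw [Matrix.trace_mul_cycle, hV2, one_mul, trace_diagonal]

private lemma conj_diag_quadform' (V : Matrix (Fin n) (Fin n) ℝ)
    (d : Fin n → ℝ) (x : Fin n → ℝ) :
    x ⬝ᵥ (V * diagonal d * star V).mulVec x
      = ∑ i, d i * ((star V).mulVec x i) ^ 2 := by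
  have hstar : star V = Vᵀ := conjTranspose_eq_transpose_of_trivial V
  rw [← mulVec_mulVec, ← mulVec_mulVec, dotProduct_mulVec]
  rw [show x ᵥ* V = Vᵀ *ᵥ x from by
    rw [← transpose_transpose V, vecMul_transpose, transpose_transpose]]
  rw [← hstar]
  simp only [dotProduct, mulVec_diagonal]
  exact Finset.sum_congr rfl fun i _ => by ring

theorem regularity_Q2' {n : ℕ} (A : Matrix (Fin n) (Fin n) ℝ) (hA : A.IsSymm)
    (u φ : ℝ) (hφ : 0 < φ)
    (hpos : (u • (1 : Matrix (Fin n) (Fin n) ℝ) - A).PosDef)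
    (htr : (u • (1 : Matrix (Fin n) (Fin n) ℝ) - A)⁻¹.trace ≤ φ)
    (Δ : ℝ) (hΔ : 0 ≤ Δ) (x : Fin n → ℝ) :
    (x ⬝ᵥ (((u + Δ) • 1 - A)⁻¹ ^ 2).mulVec x)
        / (((u + Δ) • (1 : Matrix (Fin n) (Fin n) ℝ) - A)⁻¹ ^ 2).trace
      ≤ (1 + φ * Δ) ^ 2 * ((x ⬝ᵥ ((u • 1 - A)⁻¹ ^ 2).mulVec x)
        / ((u • (1 : Matrix (Fin n) (Fin n) ℝ) - A)⁻¹ ^ 2).trace) := by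
  have hH : A.IsHermitian := by
    rwa [Matrix.IsHermitian, conjTranspose_eq_transpose_of_trivial]
  set V : Matrix (Fin n) (Fin n) ℝ := (hH.eigenvectorUnitary : Matrix (Fin n) (Fin n) ℝ) with hVdef
  have hV1 : V * star V = 1 := (Matrix.mem_unitaryGroup_iff).mp hH.eigenvectorUnitary.2
  have hV2 : star V * V = 1 := (Matrix.mem_unitaryGroup_iff').mp hH.eigenvectorUnitary.2
  set lam : Fin n → ℝ := hH.eigenvalues with hlamdef
  have hspec : A = V * diagonal lam * star V := by simpa using hH.spectral_theorem
  have hrep : ∀ c : ℝ, c • (1 : Matrix (Fin n) (Fin n) ℝ) - A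
      = V * diagonal (fun i => c - lam i) * star V := by
    intro c
    conv_lhs => rw [hspec]
    exact conj_diag_smul_one_sub' V hV1 lam c
  set y : Fin n → ℝ := (star V).mulVec x with hydef
  -- positivity of a i := u - lam i
  have ha : ∀ i, 0 < u - lam i := by
    intro i
    have hz : V.mulVec (Pi.single i 1) ≠ 0 := by
      intro h
      have h2 : (star V).mulVec (V.mulVec (Pi.single i 1)) = 0 := by rw [h, mulVec_zero]
      rw [mulVec_mulVec, hV2, one_mulVec] at h2
      have := congrFun h2 i
      simp at this
    have hq := hpos.dotProduct_mulVec_pos hz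
    rw [star_trivial, hrep u, conj_diag_quadform'] at hq
    have hyy : (star V).mulVec (V.mulVec (Pi.single i 1)) = Pi.single i 1 := by
      rw [mulVec_mulVec, hV2, one_mulVec]
    rw [hyy] at hq
    have hsum : ∑ j, (u - lam j) * ((Pi.single i 1 : Fin n → ℝ) j) ^ 2 = u - lam i := by
      rw [Finset.sum_eq_single i]
      · simp
      · intro j _ hj
        simp [Pi.single_apply, hj]
      · simp
    rwa [hsum] at hq
  have hb : ∀ i, 0 < u + Δ - lam i := fun i => by linarith [ha i]
  -- trace bound gives lower bound on a i
  have hkey : ∀ i, u + Δ - lam i ≤ (1 + φ * Δ) * (u - lam i) := by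
    intro i
    have htr2 : (∑ j, (u - lam j)⁻¹) ≤ φ := by
      rw [hrep u, conj_diag_inv' V hV1 hV2 _ (fun j => (ha j).ne'),
        conj_diag_trace' V hV2] at htr
      exact htr
    have hle : (u - lam i)⁻¹ ≤ φ := by
      refine le_trans ?_ htr2
      exact Finset.single_le_sum (fun j _ => (inv_pos.mpr (ha j)).le) (Finset.mem_univ i)
    have h1 : 1 ≤ φ * (u - lam i) := by
      rw [← inv_mul_cancel₀ (ha i).ne']
      exact mul_le_mul_of_nonneg_right hle (ha i).le
    nlinarith [ha i]
  have h1φΔ : (0:ℝ) < 1 + φ * Δ := by nlinarith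
  -- rewrite everything
  have hre : ∀ c : ℝ, (∀ i, 0 < c - lam i) →
      (x ⬝ᵥ ((c • (1 : Matrix (Fin n) (Fin n) ℝ) - A)⁻¹ ^ 2).mulVec x
          = ∑ i, ((c - lam i)⁻¹) ^ 2 * (y i) ^ 2)
        ∧ ((c • (1 : Matrix (Fin n) (Fin n) ℝ) - A)⁻¹ ^ 2).trace
          = ∑ i, ((c - lam i)⁻¹) ^ 2 := by
    intro c hc
    have e1 : (c • (1 : Matrix (Fin n) (Fin n) ℝ) - A)⁻¹ ^ 2
        = V * diagonal (fun i => ((c - lam i)⁻¹) ^ 2) * star V := by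
      rw [hrep c, conj_diag_inv' V hV1 hV2 _ (fun j => (hc j).ne'),
        conj_diag_sq' V hV2]
    exact ⟨by rw [e1, conj_diag_quadform'], by rw [e1, conj_diag_trace' V hV2]⟩
  obtain ⟨eN0, eT0⟩ := hre u ha
  obtain ⟨eN1, eT1⟩ := hre (u + Δ) hb
  rw [eN0, eT0, eN1, eT1]
  -- now scalar inequality
  rcases isEmpty_or_nonempty (Fin n) with hn | hn
  · simp
  · set Na := ∑ i, ((u - lam i)⁻¹) ^ 2 * (y i) ^ 2 with hNa
    set Nb := ∑ i, ((u + Δ - lam i)⁻¹) ^ 2 * (y i) ^ 2 with hNb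
    set Sa := ∑ i, ((u - lam i)⁻¹) ^ 2 with hSa
    set Sb := ∑ i, ((u + Δ - lam i)⁻¹) ^ 2 with hSb
    have hSa0 : 0 < Sa := Finset.sum_pos
      (fun i _ => pow_pos (inv_pos.mpr (ha i)) 2) Finset.univ_nonempty
    have hSb0 : 0 < Sb := Finset.sum_pos
      (fun i _ => pow_pos (inv_pos.mpr (hb i)) 2) Finset.univ_nonempty
    have hNa0 : 0 ≤ Na := Finset.sum_nonneg fun i _ => by positivity
    have hNba : Nb ≤ Na := by
      apply Finset.sum_le_sum
      intro i _
      have h1 : (u + Δ - lam i)⁻¹ ≤ (u - lam i)⁻¹ :=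
        inv_anti₀ (ha i) (by linarith)
      have h2 : ((u + Δ - lam i)⁻¹) ^ 2 ≤ ((u - lam i)⁻¹) ^ 2 :=
        pow_le_pow_left₀ (inv_pos.mpr (hb i)).le h1 2
      exact mul_le_mul_of_nonneg_right h2 (sq_nonneg _)
    have hSab : Sa ≤ (1 + φ * Δ) ^ 2 * Sb := by
      rw [Finset.mul_sum]
      apply Finset.sum_le_sum
      intro i _
      have h3 : (u + Δ - lam i) * (u + Δ - lam i)⁻¹
          ≤ ((1 + φ * Δ) * (u - lam i)) * (u + Δ - lam i)⁻¹ :=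
        mul_le_mul_of_nonneg_right (hkey i) (inv_pos.mpr (hb i)).le
      rw [mul_inv_cancel₀ (hb i).ne'] at h3
      have h4 : (u - lam i)⁻¹ ≤ (1 + φ * Δ) * (u + Δ - lam i)⁻¹ := by
        rw [inv_eq_one_div, div_le_iff₀ (ha i)]
        nlinarith
      calc ((u - lam i)⁻¹) ^ 2 ≤ ((1 + φ * Δ) * (u + Δ - lam i)⁻¹) ^ 2 :=
            pow_le_pow_left₀ (inv_pos.mpr (ha i)).le h4 2
        _ = (1 + φ * Δ) ^ 2 * ((u + Δ - lam i)⁻¹) ^ 2 := by ring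
    calc Nb / Sb ≤ Na / Sb := by gcongr
      _ ≤ (1 + φ * Δ) ^ 2 * (Na / Sa) := by
          rw [mul_div_assoc', div_le_div_iff₀ hSb0 hSa0]
          nlinarith [mul_le_mul_of_nonneg_left hSab hNa0]
end

section
/- Let A ≺ uI with tr((uI−A)⁻¹) ≤ φ, and let x ∈ ℝⁿ with Q₂'(0,x) ≤ (t−2τ)/(8φ), where 0 < 2τ < t ≤ 1. Then the smaller solution s₀ > 0 of the quadratic equation (1+sφ)² Q₂'(0,x) = s(1−τ) exists and satisfies s₀ ≤ (1+t)·Q₂'(0,x). -/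
open Matrix

lemma neg_le_of_sq_le' {X r : ℝ} (hr0 : 0 ≤ r) (h : X ^ 2 ≤ r ^ 2) : -r ≤ X := by
  nlinarith [sq_nonneg (X + r), sq_nonneg (X - r)]

lemma bracket_le (a t τ : ℝ) (ha0 : 0 ≤ a) (ha8 : 8 * a ≤ t - 2 * τ)
    (hτ : 0 < τ) (ht1 : t ≤ 1) : (1 + a * (1 + t)) ^ 2 ≤ (1 - τ) * (1 + t) := by
  have ht0 : 0 ≤ t - 2 * τ := by nlinarith
  have h1 : a * (1 + t) ≤ (t - 2 * τ) / 4 := by nlinarith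
  have h2 : a * (1 + t) ≤ 1 / 4 := by linarith
  have h3 : 0 ≤ a * (1 + t) := by nlinarith
  nlinarith [mul_nonneg h3 (by linarith : (0:ℝ) ≤ 1 / 4 - a * (1 + t)),
    mul_nonneg hτ.le (by linarith : (0:ℝ) ≤ 1 - t)]

lemma alg_core (φ t τ q : ℝ) (hφ : 0 < φ) (hτ : 0 < τ) (hτt : 2 * τ < t)
    (ht1 : t ≤ 1) (hq : 0 < q) (hqs : q ≤ (t - 2 * τ) / (8 * φ)) :
    ∃ s₀ : ℝ, 0 < s₀ ∧ (1 + s₀ * φ) ^ 2 * q = s₀ * (1 - τ) ∧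
      (∀ s : ℝ, (1 + s * φ) ^ 2 * q = s * (1 - τ) → s₀ ≤ s) ∧
      s₀ ≤ (1 + t) * q := by
  have ha8 : 8 * (φ * q) ≤ t - 2 * τ := by
    have := (le_div_iff₀ (by positivity : (0:ℝ) < 8 * φ)).mp hqs
    nlinarith
  have ha0 : 0 < φ * q := by positivity
  have hthalf : τ < 1 / 2 := by linarith
  have hb : 0 < 1 - τ - 2 * (φ * q) := by nlinarith
  have hD : 0 < (1 - τ - 2 * (φ * q)) ^ 2 - 4 * (φ * q) ^ 2 := by nlinarith
  set r : ℝ := Real.sqrt ((1 - τ - 2 * (φ * q)) ^ 2 - 4 * (φ * q) ^ 2) with hrdef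
  have hr0 : 0 ≤ r := Real.sqrt_nonneg _
  have hr2 : r ^ 2 = (1 - τ - 2 * (φ * q)) ^ 2 - 4 * (φ * q) ^ 2 := Real.sq_sqrt hD.le
  have hrb : r < 1 - τ - 2 * (φ * q) := by nlinarith
  have hd : (0:ℝ) < 2 * φ ^ 2 * q := by positivity
  set s₀ : ℝ := (1 - τ - 2 * (φ * q) - r) / (2 * φ ^ 2 * q) with hs₀def
  have hs0d : s₀ * (2 * φ ^ 2 * q) = 1 - τ - 2 * (φ * q) - r :=
    div_mul_cancel₀ _ hd.ne'
  refine ⟨s₀, div_pos (by linarith) hd, ?_, ?_, ?_⟩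
  · have hne : (4 * φ ^ 2 * q) ≠ 0 := by positivity
    apply mul_left_cancel₀ hne
    linear_combination (s₀ * (2 * φ ^ 2 * q) - (1 - τ - 2 * (φ * q)) - r) * hs0d + hr2
  · intro s hs
    have hsq : (2 * φ ^ 2 * q * s - (1 - τ - 2 * (φ * q))) ^ 2 = r ^ 2 := by
      rw [hr2]; linear_combination (4 * φ ^ 2 * q) * hs
    have := neg_le_of_sq_le' hr0 hsq.le
    rw [hs₀def, div_le_iff₀ hd]
    linarith
  · have hbr := bracket_le (φ * q) t τ ha0.le ha8 hτ ht1
    have hfy : (2 * φ ^ 2 * q * ((1 + t) * q) - (1 - τ - 2 * (φ * q))) ^ 2 ≤ r ^ 2 := by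
      rw [hr2]
      nlinarith [mul_nonneg (by positivity : (0:ℝ) ≤ 4 * φ ^ 2 * q ^ 2)
        (by linarith : (0:ℝ) ≤ (1 - τ) * (1 + t) - (1 + φ * q * (1 + t)) ^ 2)]
    have := neg_le_of_sq_le' hr0 hfy
    rw [hs₀def, div_le_iff₀ hd]
    linarith

lemma quad_form_div_trace_pos {n : ℕ} (hn : 0 < n) (M : Matrix (Fin n) (Fin n) ℝ)
    (hM : M.PosDef) (x : Fin n → ℝ) (hx : x ≠ 0) :
    0 < (x ⬝ᵥ (M ^ 2).mulVec x) / (M ^ 2).trace := by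
  have hsym : Mᵀ = M := by
    rw [← conjTranspose_eq_transpose_of_trivial]; exact hM.1
  set y := M *ᵥ x with hy
  have hyne : y ≠ 0 := by
    intro h
    have := hM.dotProduct_mulVec_pos hx
    rw [← hy, h] at this
    simp at this
  have hnum : x ⬝ᵥ (M ^ 2).mulVec x = y ⬝ᵥ y := by
    rw [pow_two, ← mulVec_mulVec, dotProduct_mulVec, ← mulVec_transpose, hsym]
  have hnum_pos : 0 < x ⬝ᵥ (M ^ 2).mulVec x := by
    rw [hnum]
    have hne : y ⬝ᵥ y ≠ 0 := fun h => hyne (dotProduct_self_eq_zero.mp h)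
    have hge : 0 ≤ y ⬝ᵥ y := Finset.sum_nonneg fun i _ => mul_self_nonneg _
    exact lt_of_le_of_ne hge (Ne.symm hne)
  have htr : 0 < (M ^ 2).trace := by
    have hdiag : ∀ i, 0 < M i i := by
      intro i
      have := hM.dotProduct_mulVec_pos (x := Pi.single i 1) (by simp [Pi.single_eq_same, funext_iff]; exact ⟨i, by simp⟩)
      simpa [mulVec_single, single_dotProduct] using this
    have : (M ^ 2).trace = ∑ i, ∑ j, (M i j)^2 := by
      rw [pow_two, trace]
      congr 1; funext i
      simp [Matrix.mul_apply, diag]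
      congr 1; funext j
      have h2 : M i j = M j i := (congrFun (congrFun hsym i) j).symm
      rw [pow_two, h2]
    rw [this]
    have i0 : Fin n := ⟨0, hn⟩
    apply Finset.sum_pos'
    · intro i _; exact Finset.sum_nonneg fun j _ => sq_nonneg _
    · exact ⟨i0, Finset.mem_univ _, Finset.sum_pos' (fun j _ => sq_nonneg _)
        ⟨i0, Finset.mem_univ _, by have := hdiag i0; positivity⟩⟩
  positivity

theorem smaller_root_bound {n : ℕ} (A : Matrix (Fin n) (Fin n) ℝ) (hA : A.IsSymm)
    (u φ t τ : ℝ) (hφ : 0 < φ)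
    (hpos : (u • (1 : Matrix (Fin n) (Fin n) ℝ) - A).PosDef)
    (htr : (u • (1 : Matrix (Fin n) (Fin n) ℝ) - A)⁻¹.trace ≤ φ)
    (hτ : 0 < τ) (hτt : 2 * τ < t) (ht1 : t ≤ 1)
    (x : Fin n → ℝ) (hx : x ≠ 0)
    (q : ℝ)
    (hq : q = (x ⬝ᵥ ((u • 1 - A)⁻¹ ^ 2).mulVec x)
        / ((u • (1 : Matrix (Fin n) (Fin n) ℝ) - A)⁻¹ ^ 2).trace)
    (hqsmall : q ≤ (t - 2 * τ) / (8 * φ)) :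
    ∃ s₀ : ℝ, 0 < s₀ ∧ (1 + s₀ * φ) ^ 2 * q = s₀ * (1 - τ) ∧
      (∀ s : ℝ, (1 + s * φ) ^ 2 * q = s * (1 - τ) → s₀ ≤ s) ∧
      s₀ ≤ (1 + t) * q := by
  have hn : 0 < n := by
    rcases Nat.eq_zero_or_pos n with rfl | hn
    · exact absurd (funext fun i => i.elim0) hx
    · exact hn
  have hq_pos : 0 < q := by
    rw [hq]
    exact quad_form_div_trace_pos hn _ hpos.inv x hx
  exact alg_core φ t τ q hφ hτ hτt ht1 hq_pos hqsmall
end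

section
/- Let ξ₁,…,ξ_n be positive random variables with E ξᵢ = 1 satisfying P{Σ_{i∈S} ξᵢ ≥ t} ≤ C t^{−1−η} for all subsets S ⊆ [n] and all t > C|S|, for some C, η > 0. Let μ₁,…,μ_n > 0 with Σᵢ 1/μᵢ ≤ 1, and let K ≥ 4C. Let μ be the minimal nonnegative number such that Σᵢ ξᵢ/(μᵢ + μ) ≤ K. Then E μ ≤ C(4+4/η)^{3+η} / (K/4)^{1+η}. -/
open MeasureTheory Set

-- 1 - 2^(-x) ≥ x/(2+x)
lemma aux_one_sub_rpow {x : ℝ} (hx : 0 ≤ x) : x / (2 + x) ≤ 1 - (2:ℝ) ^ (-x) := by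
  have h2 : (2:ℝ) ^ (-x) = Real.exp (Real.log 2 * (-x)) := by
    rw [Real.rpow_def_of_pos (by norm_num)]
  have hlog : (1/2 : ℝ) ≤ Real.log 2 := by
    have := Real.log_two_gt_d9
    linarith
  have hexp : Real.exp (Real.log 2 * (-x)) ≤ 1 / (1 + Real.log 2 * x) := by
    have h1 : Real.log 2 * x + 1 ≤ Real.exp (Real.log 2 * x) := Real.add_one_le_exp _
    have hpos : (0:ℝ) < 1 + Real.log 2 * x := by nlinarith
    rw [mul_neg, Real.exp_neg]
    rw [inv_eq_one_div, div_le_div_iff₀ (Real.exp_pos _) hpos]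
    nlinarith [Real.exp_pos (Real.log 2 * x)]
  have h3 : (1:ℝ) / (1 + Real.log 2 * x) ≤ 1 / (1 + x/2) := by
    apply one_div_le_one_div_of_le (by linarith)
    nlinarith
  have h4 : (1:ℝ) / (1 + x/2) = 2 / (2 + x) := by
    rw [div_eq_div_iff (by linarith) (by linarith)]; ring
  have h5 : (2:ℝ)^(-x) ≤ 2/(2+x) := by rw [h2]; calc Real.exp (Real.log 2 * (-x)) ≤ 1 / (1 + Real.log 2 * x) := hexp
                                          _ ≤ 1 / (1 + x/2) := h3
                                          _ = 2/(2+x) := h4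
  have : x / (2+x) = 1 - 2/(2+x) := by
    field_simp
    ring
  rw [this]
  linarith

-- geometric sum bound over arbitrary finset of ℕ
lemma aux_geom_sum {ρ : ℝ} (h0 : 0 ≤ ρ) (h1 : ρ < 1) (J : Finset ℕ) :
    ∑ j ∈ J, ρ ^ j ≤ 1 / (1 - ρ) := by
  classical
  obtain ⟨m, hm⟩ : ∃ m, J ⊆ Finset.range m := ⟨(J.sup id) + 1, fun j hj =>
    Finset.mem_range.mpr (Nat.lt_succ_of_le (Finset.le_sup (f := id) hj))⟩
  calc ∑ j ∈ J, ρ ^ j ≤ ∑ j ∈ Finset.range m, ρ ^ j :=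
        Finset.sum_le_sum_of_subset_of_nonneg hm (fun i _ _ => pow_nonneg h0 i)
    _ ≤ 1 / (1-ρ) := by
        rw [geom_sum_eq (by linarith)]
        have he : (ρ^m - 1)/(ρ - 1) = (1 - ρ^m)/(1-ρ) := by
          rw [div_eq_div_iff (by linarith) (by linarith)]; ring
        rw [he, div_le_div_iff₀ (by linarith) (by linarith)]
        nlinarith [pow_nonneg h0 m]

-- the shifted integral
lemma aux_integrableOn_shift {c η : ℝ} (hc : 0 < c) (hη : 0 < η) :
    IntegrableOn (fun s : ℝ => (c + s) ^ (-1 - η)) (Ioi (0:ℝ)) := by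
  have hmp : MeasurePreserving (fun s : ℝ => s + c) volume volume :=
    measurePreserving_add_right volume c
  have := (integrableOn_Ioi_rpow_of_lt (a := -1-η) (by linarith) hc)
  have h2 := (hmp.integrableOn_comp_preimage
    (MeasurableEquiv.addRight c).measurableEmbedding).mpr this
  have hpre : (fun s : ℝ => s + c) ⁻¹' (Set.Ioi c) = Set.Ioi 0 := by
    ext y; simp only [Set.mem_preimage, Set.mem_Ioi]; constructor <;> intro h <;> linarith
  rw [hpre] at h2
  have hfe : (fun s : ℝ => (c+s)^(-1-η)) = ((fun t : ℝ => t^(-1-η)) ∘ fun s : ℝ => s + c) := by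
    ext s; simp [Function.comp, add_comm]
  rw [hfe]
  exact h2

lemma aux_integral_shift {c η : ℝ} (hc : 0 < c) (hη : 0 < η) :
    ∫ s in Ioi (0:ℝ), (c + s) ^ (-1 - η) = c ^ (-η) / η := by
  have hmp : MeasurePreserving (fun s : ℝ => s + c) volume volume :=
    measurePreserving_add_right volume c
  have himg : (fun s : ℝ => s + c) '' (Ioi 0) = Ioi c := by
    simpa using Set.image_add_const_Ioi (a := c) (b := (0:ℝ))
  have key := hmp.setIntegral_image_emb (MeasurableEquiv.addRight c).measurableEmbedding
    (fun t : ℝ => t ^ (-1-η)) (Ioi 0)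
  rw [himg] at key
  have : ∫ s in Ioi (0:ℝ), (c+s) ^ (-1-η) = ∫ t in Ioi c, t ^ (-1-η) := by
    simp_rw [add_comm c]; exact key.symm
  rw [this, integral_Ioi_rpow_of_lt (by linarith) hc]
  rw [show (-1 - η + 1) = -η by ring]
  field_simp

set_option maxHeartbeats 1000000 in
theorem shift_inverse_problem {n : ℕ}
    {Ω : Type*} [MeasureSpace Ω] [IsProbabilityMeasure (volume : Measure Ω)]
    (ξ : Fin n → Ω → ℝ) (hmeas : ∀ i, Measurable (ξ i))
    (hpos : ∀ i ω, 0 < ξ i ω)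
    (hint : ∀ i, Integrable (ξ i)) (hmean : ∀ i, ∫ ω, ξ i ω = 1)
    (C η : ℝ) (hC : 0 < C) (hη : 0 < η)
    (htail : ∀ S : Finset (Fin n), ∀ t : ℝ, C * S.card < t →
      (volume {ω | t ≤ ∑ i ∈ S, ξ i ω}).toReal ≤ C * t ^ (-1 - η))
    (μs : Fin n → ℝ) (hμs : ∀ i, 0 < μs i) (hμsum : ∑ i, (μs i)⁻¹ ≤ 1)
    (K : ℝ) (hK : 4 * C ≤ K)
    (μ : Ω → ℝ)
    (hμ : ∀ ω, IsLeast {m : ℝ | 0 ≤ m ∧ ∑ i, ξ i ω / (μs i + m) ≤ K} (μ ω)) :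
    ∫ ω, μ ω ≤ C * (4 + 4 / η) ^ (3 + η) / (K / 4) ^ (1 + η) := by
  classical
  have hη1 : (0:ℝ) < 1 + η := by linarith
  have hK0 : (0:ℝ) < K := lt_of_lt_of_le (by positivity) hK
  have hRHS0 : (0:ℝ) ≤ C * (4 + 4 / η) ^ (3 + η) / (K / 4) ^ (1 + η) := by positivity
  by_cases hIntμ : Integrable μ (volume : Measure Ω)
  swap
  · rw [integral_undef hIntμ]; exact hRHS0
  have hμnn : ∀ ω, 0 ≤ μ ω := fun ω => (hμ ω).1.1
  -- definitions
  set x : ℝ := η / (2 * (1 + η)) with hx_def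
  have hx0 : 0 < x := by positivity
  have hxhalf : x ≤ 1/2 := by
    rw [hx_def, div_le_div_iff₀ (by linarith) (by norm_num)]; nlinarith
  set θ : ℝ := (2:ℝ) ^ (-x) with hθ_def
  have hθ0 : 0 < θ := Real.rpow_pos_of_pos two_pos _
  have hθ1 : θ < 1 := Real.rpow_lt_one_of_one_lt_of_neg one_lt_two (by linarith)
  have hθlb : η / (5 * (1 + η)) ≤ 1 - θ := by
    have h1 := aux_one_sub_rpow hx0.le
    have h2 : x / (5/2 : ℝ) ≤ x / (2 + x) :=
      div_le_div_of_nonneg_left hx0.le (by linarith) (by linarith)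
    have h3 : η / (5 * (1 + η)) = x / (5/2 : ℝ) := by
      rw [hx_def]; field_simp
    rw [h3]; linarith
  set jdx : Fin n → ℕ := fun i => ⌊Real.logb 2 (μs i)⌋₊ with hjdx_def
  set J : Finset ℕ := Finset.image jdx Finset.univ with hJ_def
  set Sj : ℕ → Finset (Fin n) := fun j => Finset.univ.filter (fun i => jdx i = j) with hSj_def
  set aw : ℕ → ℝ := fun j => ∑ i ∈ Sj j, (μs i)⁻¹ with haw_def
  set g : ℕ → ℝ := fun j => (1 - θ) * θ ^ j with hg_def
  set w : ℕ → ℝ := fun j => (aw j + g j) / 2 with hw_def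
  have h2j : ∀ j : ℕ, (0:ℝ) < 2 ^ j := fun j => by positivity
  have hμ1 : ∀ i, 1 ≤ μs i := by
    intro i
    have h1 : (μs i)⁻¹ ≤ 1 := le_trans (Finset.single_le_sum
      (f := fun i => (μs i)⁻¹) (fun i _ => inv_nonneg.mpr (hμs i).le) (Finset.mem_univ i)) hμsum
    have h2 : 0 < μs i := hμs i
    nlinarith [mul_nonneg h2.le (sub_nonneg.mpr h1), mul_inv_cancel₀ h2.ne']
  have hlow : ∀ i, (2:ℝ) ^ (jdx i) ≤ μs i := by
    intro i
    have hlb : ((jdx i : ℕ) : ℝ) ≤ Real.logb 2 (μs i) :=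
      Nat.floor_le (Real.logb_nonneg one_lt_two (hμ1 i))
    calc (2:ℝ) ^ (jdx i) = (2:ℝ) ^ ((jdx i : ℕ) : ℝ) := (Real.rpow_natCast 2 _).symm
      _ ≤ (2:ℝ) ^ Real.logb 2 (μs i) := Real.rpow_le_rpow_of_exponent_le one_le_two hlb
      _ = μs i := Real.rpow_logb two_pos (by norm_num) (hμs i)
  have hhigh : ∀ i, μs i < (2:ℝ) ^ (jdx i + 1) := by
    intro i
    have hub : Real.logb 2 (μs i) < (jdx i : ℝ) + 1 := Nat.lt_floor_add_one _
    calc μs i = (2:ℝ) ^ Real.logb 2 (μs i) := (Real.rpow_logb two_pos (by norm_num) (hμs i)).symm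
      _ < (2:ℝ) ^ (((jdx i : ℕ) : ℝ) + 1) := Real.rpow_lt_rpow_of_exponent_lt one_lt_two hub
      _ = (2:ℝ) ^ (((jdx i + 1 : ℕ) : ℝ)) := by push_cast; ring_nf
      _ = (2:ℝ) ^ (jdx i + 1) := Real.rpow_natCast 2 _
  have hlowSj : ∀ j : ℕ, ∀ i ∈ Sj j, (2:ℝ) ^ j ≤ μs i := by
    intro j i hi
    rw [hSj_def] at hi
    simp only [Finset.mem_filter] at hi
    rw [← hi.2]; exact hlow i
  have hawnn : ∀ j, 0 ≤ aw j := fun j =>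
    Finset.sum_nonneg (fun i _ => by have := hμs i; positivity)
  have hg0 : ∀ j, 0 < g j := fun j => by
    have h : (0:ℝ) < θ ^ j := by positivity
    show (0:ℝ) < (1 - θ) * θ ^ j
    nlinarith
  have hgnn : ∀ j, 0 ≤ g j := fun j => (hg0 j).le
  have hw0 : ∀ j, 0 < w j := fun j => by
    have h1 := hawnn j; have h2 := hg0 j; rw [hw_def]; dsimp only; linarith
  -- sum of weights at most 1
  have hawsum : ∑ j ∈ J, aw j ≤ 1 := by
    have key : ∑ j ∈ J, aw j = ∑ i : Fin n, (μs i)⁻¹ :=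
      Finset.sum_fiberwise_of_maps_to (fun i _ => Finset.mem_image_of_mem jdx (Finset.mem_univ i)) _
    rw [key]; exact hμsum
  have hgsum : ∑ j ∈ J, g j ≤ 1 := by
    rw [hg_def]
    rw [← Finset.mul_sum]
    calc (1-θ) * ∑ j ∈ J, θ ^ j ≤ (1-θ) * (1/(1-θ)) :=
          mul_le_mul_of_nonneg_left (aux_geom_sum hθ0.le hθ1 J) (by linarith)
      _ = 1 := by rw [mul_one_div]; exact div_self (by linarith)
  have hwsum : ∑ j ∈ J, w j ≤ 1 := by
    rw [hw_def]
    rw [← Finset.sum_div]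
    rw [Finset.sum_add_distrib]
    linarith
  -- cardinality bound
  have hcard : ∀ j ∈ J, ((Sj j).card : ℝ) * ((2:ℝ) ^ (j+1))⁻¹ < aw j := by
    intro j hj
    rw [hJ_def] at hj
    obtain ⟨i0, _, hi0⟩ := Finset.mem_image.mp hj
    have hne : (Sj j).Nonempty := ⟨i0, by rw [hSj_def]; simp [hi0]⟩
    have h1 : ∑ i ∈ Sj j, ((2:ℝ) ^ (j+1))⁻¹ < ∑ i ∈ Sj j, (μs i)⁻¹ := by
      apply Finset.sum_lt_sum_of_nonempty hne
      intro i hi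
      apply inv_strictAnti₀ (hμs i)
      rw [hSj_def] at hi; simp only [Finset.mem_filter] at hi
      rw [← hi.2]; exact hhigh i
    rw [Finset.sum_const, nsmul_eq_mul] at h1
    exact h1
  -- threshold bound
  have hthresh : ∀ j ∈ J, ∀ s : ℝ, 0 ≤ s → C * ((Sj j).card : ℝ) < K * w j * ((2:ℝ)^j + s) := by
    intro j hj s hs
    have hc := hcard j hj
    have hp : (0:ℝ) < 2^j := h2j j
    have hcardnn : (0:ℝ) ≤ ((Sj j).card : ℝ) := Nat.cast_nonneg _
    have h2 : ((2:ℝ) ^ (j+1))⁻¹ = (2 * 2^j)⁻¹ := by rw [pow_succ]; ring_nf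
    rw [h2] at hc
    have hc' : ((Sj j).card : ℝ) / (2 * 2^j) < aw j := by
      rw [div_eq_mul_inv]; exact hc
    have he : ((Sj j).card:ℝ)/(4*2^j) = (((Sj j).card:ℝ)/(2*2^j))/2 := by
      rw [div_div]; ring_nf
    have hwlb : ((Sj j).card : ℝ) / (4 * 2^j) < w j := by
      rw [hw_def]; dsimp only
      have := hg0 j
      linarith
    have s1 : K * (((Sj j).card:ℝ)/(4*2^j)) * 2^j = K*((Sj j).card:ℝ)/4 := by
      field_simp
    have s2 : K * (((Sj j).card:ℝ)/(4*2^j)) * 2^j < K * w j * 2^j :=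
      mul_lt_mul_of_pos_right (mul_lt_mul_of_pos_left hwlb hK0) hp
    have s3 : K * w j * (2^j) ≤ K * w j * ((2:ℝ)^j + s) := by
      have hwj := hw0 j
      apply mul_le_mul_of_nonneg_left (by linarith) (by positivity : (0:ℝ) ≤ K * w j)
    have s4 : C*((Sj j).card:ℝ) ≤ K*((Sj j).card:ℝ)/4 := by
      nlinarith [mul_le_mul_of_nonneg_right hK hcardnn]
    calc C * ((Sj j).card : ℝ) ≤ K*((Sj j).card:ℝ)/4 := s4
      _ = K * (((Sj j).card:ℝ)/(4*2^j)) * 2^j := s1.symm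
      _ < K * w j * 2^j := s2
      _ ≤ K * w j * ((2:ℝ)^j + s) := s3
  -- measurability of block sums
  have hmeasSum : ∀ j : ℕ, Measurable (fun ω => ∑ i ∈ Sj j, ξ i ω) :=
    fun j => Finset.measurable_sum _ (fun i _ => hmeas i)
  -- the key tail estimate
  have hEvent : ∀ s : ℝ, 0 < s → (volume {ω | s < μ ω}).toReal ≤
      ∑ j ∈ J, (C * (K*((1-θ)*θ^j/2))^(-1-η)) * ((2:ℝ)^j + s)^(-1-η) := by
    intro s hs
    have hincl : {ω | s < μ ω} ⊆ ⋃ j ∈ J, {ω | K * w j * ((2:ℝ)^j + s) ≤ ∑ i ∈ Sj j, ξ i ω} := by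
      intro ω hω
      simp only [mem_setOf_eq] at hω
      by_contra hcon
      simp only [mem_iUnion, mem_setOf_eq, not_exists, not_le] at hcon
      have hblock : ∀ j ∈ J, ∑ i ∈ Sj j, ξ i ω < K * w j * ((2:ℝ)^j + s) := hcon
      have hle : ∑ i, ξ i ω / (μs i + s) ≤ K := by
        calc ∑ i, ξ i ω / (μs i + s)
            = ∑ j ∈ J, ∑ i ∈ Sj j, ξ i ω / (μs i + s) :=
              (Finset.sum_fiberwise_of_maps_to
                (fun i _ => Finset.mem_image_of_mem jdx (Finset.mem_univ i)) _).symm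
          _ ≤ ∑ j ∈ J, (∑ i ∈ Sj j, ξ i ω) / ((2:ℝ)^j + s) := by
              apply Finset.sum_le_sum
              intro j hj
              rw [Finset.sum_div]
              apply Finset.sum_le_sum
              intro i hi
              apply div_le_div_of_nonneg_left (hpos i ω).le (by positivity)
              have := hlowSj j i hi; linarith
          _ ≤ ∑ j ∈ J, K * w j := by
              apply Finset.sum_le_sum
              intro j hj
              rw [div_le_iff₀ (by positivity)]
              exact (hblock j hj).le
          _ = K * ∑ j ∈ J, w j := by rw [Finset.mul_sum]
          _ ≤ K := by
              calc K * ∑ j ∈ J, w j ≤ K * 1 := mul_le_mul_of_nonneg_left hwsum hK0.le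
                _ = K := mul_one K
      exact absurd ((hμ ω).2 ⟨hs.le, hle⟩) (not_le.mpr hω)
    have hUb : volume {ω | s < μ ω} ≤ ∑ j ∈ J, volume {ω | K * w j * ((2:ℝ)^j + s) ≤ ∑ i ∈ Sj j, ξ i ω} :=
      le_trans (measure_mono hincl) (measure_biUnion_finset_le J _)
    have hfin : ∀ j ∈ J, volume {ω | K * w j * ((2:ℝ)^j + s) ≤ ∑ i ∈ Sj j, ξ i ω} ≠ ⊤ :=
      fun j _ => measure_ne_top _ _
    calc (volume {ω | s < μ ω}).toReal
        ≤ (∑ j ∈ J, volume {ω | K * w j * ((2:ℝ)^j + s) ≤ ∑ i ∈ Sj j, ξ i ω}).toReal :=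
          ENNReal.toReal_mono (ENNReal.sum_ne_top.mpr hfin) hUb
      _ = ∑ j ∈ J, (volume {ω | K * w j * ((2:ℝ)^j + s) ≤ ∑ i ∈ Sj j, ξ i ω}).toReal :=
          ENNReal.toReal_sum hfin
      _ ≤ ∑ j ∈ J, (C * (K*((1-θ)*θ^j/2))^(-1-η)) * ((2:ℝ)^j + s)^(-1-η) := by
          apply Finset.sum_le_sum
          intro j hj
          have ht1 := htail (Sj j) (K * w j * ((2:ℝ)^j + s)) (hthresh j hj s hs.le)
          have hgj := hg0 j
          have h2js : (0:ℝ) < (2:ℝ)^j + s := by have := h2j j; linarith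
          have hθjpos : (0:ℝ) < θ^j := by positivity
          have hb1 : (0:ℝ) < K*((1-θ)*θ^j/2) * ((2:ℝ)^j + s) := by
            have h1θ : (0:ℝ) < 1 - θ := by linarith
            positivity
          have hb2 : K*((1-θ)*θ^j/2) * ((2:ℝ)^j + s) ≤ K * w j * ((2:ℝ)^j + s) := by
            apply mul_le_mul_of_nonneg_right _ h2js.le
            apply mul_le_mul_of_nonneg_left _ hK0.le
            rw [hw_def]; dsimp only
            have h3 : (1-θ)*θ^j = g j := by rw [hg_def]
            rw [h3]
            have := hawnn j
            linarith
          have ht2 : (K * w j * ((2:ℝ)^j + s)) ^ (-1-η) ≤ (K*((1-θ)*θ^j/2) * ((2:ℝ)^j + s)) ^ (-1-η) :=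
            Real.rpow_le_rpow_of_nonpos hb1 hb2 (by linarith)
          have hmulr : (K*((1-θ)*θ^j/2) * ((2:ℝ)^j + s)) ^ (-1-η)
              = (K*((1-θ)*θ^j/2))^(-1-η) * ((2:ℝ)^j + s)^(-1-η) := by
            apply Real.mul_rpow _ h2js.le
            have h1θ : (0:ℝ) < 1 - θ := by linarith
            positivity
          calc (volume {ω | K * w j * ((2:ℝ)^j + s) ≤ ∑ i ∈ Sj j, ξ i ω}).toReal
              ≤ C * (K * w j * ((2:ℝ)^j + s)) ^ (-1-η) := ht1
            _ ≤ C * (K*((1-θ)*θ^j/2) * ((2:ℝ)^j + s)) ^ (-1-η) :=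
                mul_le_mul_of_nonneg_left ht2 hC.le
            _ = (C * (K*((1-θ)*θ^j/2))^(-1-η)) * ((2:ℝ)^j + s)^(-1-η) := by
                rw [hmulr]; ring
  -- the majorant and its integral
  set D : ℕ → ℝ := fun j => C * (K*((1-θ)*θ^j/2))^(-1-η) with hD_def
  set G : ℝ → ℝ := fun s => ∑ j ∈ J, D j * ((2:ℝ)^j + s)^(-1-η) with hG_def
  have hGint : IntegrableOn G (Ioi (0:ℝ)) := by
    rw [hG_def]
    apply MeasureTheory.integrable_finset_sum
    intro j _
    exact ((aux_integrableOn_shift (h2j j) hη).const_mul (D j))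
  set F : ℝ → ℝ := fun t => (volume {a | t < μ a}).toReal with hF_def
  have hFmeas : Measurable F := by
    apply Antitone.measurable
    intro t u htu
    exact ENNReal.toReal_mono (measure_ne_top _ _)
      (measure_mono (fun a ha => lt_of_le_of_lt htu ha))
  have hFG : ∀ t ∈ Ioi (0:ℝ), F t ≤ G t := fun t ht => hEvent t ht
  have hFint : IntegrableOn F (Ioi (0:ℝ)) := by
    apply Integrable.mono' hGint hFmeas.aestronglyMeasurable
    rw [ae_restrict_iff' measurableSet_Ioi]
    refine ae_of_all _ (fun t ht => ?_)
    rw [Real.norm_eq_abs, abs_of_nonneg ENNReal.toReal_nonneg]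
    exact hFG t ht
  -- layer cake
  have hlayer : ∫ ω, μ ω = ∫ t in Ioi (0:ℝ), F t :=
    hIntμ.integral_eq_integral_meas_lt (ae_of_all _ hμnn)
  have hGval : ∫ t in Ioi (0:ℝ), G t = ∑ j ∈ J, D j * (((2:ℝ)^j)^(-η) / η) := by
    rw [hG_def]
    rw [MeasureTheory.integral_finset_sum _ (fun j _ => (aux_integrableOn_shift (h2j j) hη).const_mul (D j))]
    apply Finset.sum_congr rfl
    intro j _
    rw [MeasureTheory.integral_const_mul, aux_integral_shift (h2j j) hη]
  -- final algebra
  set ρ : ℝ := (2:ℝ) ^ (-(η/2)) with hρ_def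
  have hρ0 : 0 < ρ := Real.rpow_pos_of_pos two_pos _
  have hρ1 : ρ < 1 := Real.rpow_lt_one_of_one_lt_of_neg one_lt_two (by linarith)
  have hx1η : x * (1+η) = η/2 := by rw [hx_def]; field_simp
  have hA1pos : (0:ℝ) < K*(1-θ)/2 := by
    have h1θ : (0:ℝ) < 1-θ := by linarith
    positivity
  have hterm : ∀ j : ℕ, D j * (((2:ℝ)^j)^(-η)/η) = ((C/η) * (K*(1-θ)/2)^(-1-η)) * ρ^j := by
    intro j
    have hθj : θ^j = (2:ℝ)^(-x*(j:ℝ)) := by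
      rw [← Real.rpow_natCast θ j, hθ_def, ← Real.rpow_mul (by norm_num : (0:ℝ) ≤ 2)]
    have hρj : ρ^j = (2:ℝ)^(-(η/2)*(j:ℝ)) := by
      rw [← Real.rpow_natCast ρ j, hρ_def, ← Real.rpow_mul (by norm_num : (0:ℝ) ≤ 2)]
    have e1 : K*((1-θ)*θ^j/2) = (K*(1-θ)/2) * θ^j := by ring
    have h1 : ((2:ℝ)^(-x*(j:ℝ)))^(-1-η) = (2:ℝ)^((-x*(j:ℝ))*(-1-η)) :=
      (Real.rpow_mul (by norm_num) _ _).symm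
    have h2 : ((2:ℝ)^((j:ℝ)))^(-η) = (2:ℝ)^((j:ℝ)*(-η)) :=
      (Real.rpow_mul (by norm_num) _ _).symm
    have h3 : (2:ℝ)^((-x*(j:ℝ))*(-1-η)) * (2:ℝ)^((j:ℝ)*(-η)) = (2:ℝ)^(-(η/2)*(j:ℝ)) := by
      rw [← Real.rpow_add two_pos]
      congr 1
      linear_combination (j:ℝ) * hx1η
    show (C * (K*((1-θ)*θ^j/2))^(-1-η)) * (((2:ℝ)^j)^(-η)/η) = _
    rw [e1, Real.mul_rpow hA1pos.le (pow_nonneg hθ0.le j), hθj, h1,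
        ← Real.rpow_natCast (2:ℝ) j, h2, hρj, ← h3]
    field_simp
  have hE0nn : (0:ℝ) ≤ (C/η) * (K*(1-θ)/2)^(-1-η) := by positivity
  have hsumfinal : ∑ j ∈ J, D j * (((2:ℝ)^j)^(-η)/η)
      ≤ ((C/η) * (K*(1-θ)/2)^(-1-η)) * (1/(1-ρ)) := by
    calc ∑ j ∈ J, D j * (((2:ℝ)^j)^(-η)/η)
        = ∑ j ∈ J, ((C/η) * (K*(1-θ)/2)^(-1-η)) * ρ^j :=
          Finset.sum_congr rfl (fun j _ => hterm j)
      _ = ((C/η) * (K*(1-θ)/2)^(-1-η)) * ∑ j ∈ J, ρ^j := by rw [← Finset.mul_sum]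
      _ ≤ _ := mul_le_mul_of_nonneg_left (aux_geom_sum hρ0.le hρ1 J) hE0nn
  have hinvρ : 1/(1-ρ) ≤ (4+η)/η := by
    have h1 := aux_one_sub_rpow (le_of_lt (by positivity : (0:ℝ) < η/2))
    have h2 : (η/2)/(2+η/2) = η/(4+η) := by
      rw [div_eq_div_iff (by linarith) (by linarith)]; ring
    rw [h2, ← hρ_def] at h1
    calc 1/(1-ρ) ≤ 1/(η/(4+η)) := one_div_le_one_div_of_le (by positivity) h1
      _ = (4+η)/η := one_div_div _ _
  have h1ρnn : (0:ℝ) ≤ 1/(1-ρ) := by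
    have : (0:ℝ) < 1 - ρ := by linarith
    positivity
  have hrpow2 : (K*(1-θ)/2)^(-1-η) ≤ (K*η/(10*(1+η)))^(-1-η) := by
    apply Real.rpow_le_rpow_of_nonpos (by positivity) ?_ (by linarith)
    have hm := mul_le_mul_of_nonneg_left hθlb hK0.le
    calc K*η/(10*(1+η)) = K*(η/(5*(1+η)))/2 := by field_simp; ring
      _ ≤ K*(1-θ)/2 := by linarith
  have hA2pos : (0:ℝ) < K*η/(10*(1+η)) := by positivity
  have hflip : (K*η/(10*(1+η)))^(-1-η) = ((10*(1+η))/(K*η))^(1+η) := by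
    rw [show (-1-η : ℝ) = -(1+η) by ring, Real.rpow_neg hA2pos.le,
      ← Real.inv_rpow hA2pos.le, inv_div]
  have hmono : ((10*(1+η))/(K*η))^(1+η) ≤ ((16*(1+η))/(K*η))^(1+η) := by
    apply Real.rpow_le_rpow (by positivity) ?_ (by linarith)
    gcongr
    linarith
  have hb44 : (0:ℝ) < 4+4/η := by positivity
  have hRHSdec : C * (4+4/η)^(3+η) / (K/4)^(1+η)
      = C * (4+4/η)^2 * ((16*(1+η))/(K*η))^(1+η) := by
    have h1 : (4+4/η)^(3+η) = (4+4/η)^((2:ℝ)) * (4+4/η)^(1+η) := by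
      rw [← Real.rpow_add hb44]; congr 1; ring
    have h2 : (4+4/η)^((2:ℝ)) = (4+4/η)^2 := Real.rpow_two _
    have h3 : (4+4/η)^(1+η) / (K/4)^(1+η) = ((4+4/η)/(K/4))^(1+η) :=
      (Real.div_rpow hb44.le (by positivity) _).symm
    have h4 : (4+4/η)/(K/4) = (16*(1+η))/(K*η) := by
      rw [div_eq_div_iff (by positivity) (by positivity)]
      field_simp
      ring
    calc C * (4+4/η)^(3+η) / (K/4)^(1+η)
        = C * (4+4/η)^2 * ((4+4/η)^(1+η)/(K/4)^(1+η)) := by rw [h1, h2]; ring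
      _ = C * (4+4/η)^2 * ((16*(1+η))/(K*η))^(1+η) := by rw [h3, h4]
  have hcoef : (C/η) * ((4+η)/η) ≤ C * (4+4/η)^2 := by
    have e1 : (C/η) * ((4+η)/η) = C * (4+η)/η^2 := by ring
    have e2 : C * (4+4/η)^2 = C * (16*(1+η)^2)/η^2 := by
      have h : (4 + 4/η) = 4*(1+η)/η := by
        rw [eq_div_iff hη.ne']
        field_simp
        ring
      rw [h, div_pow, mul_div_assoc]
      congr 2
      ring
    rw [e1, e2]
    apply div_le_div_of_nonneg_right ?_ (by positivity : (0:ℝ) ≤ η^2)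
    nlinarith [mul_nonneg hC.le (sq_nonneg η), mul_nonneg hC.le hη.le]
  calc ∫ ω, μ ω = ∫ t in Ioi (0:ℝ), F t := hlayer
    _ ≤ ∫ t in Ioi (0:ℝ), G t := setIntegral_mono_on hFint hGint measurableSet_Ioi hFG
    _ = ∑ j ∈ J, D j * (((2:ℝ)^j)^(-η)/η) := hGval
    _ ≤ ((C/η) * (K*(1-θ)/2)^(-1-η)) * (1/(1-ρ)) := hsumfinal
    _ ≤ ((C/η) * (K*η/(10*(1+η)))^(-1-η)) * ((4+η)/η) := by
        apply mul_le_mul (mul_le_mul_of_nonneg_left hrpow2 (by positivity)) hinvρ h1ρnn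
        positivity
    _ = ((C/η) * ((4+η)/η)) * ((10*(1+η))/(K*η))^(1+η) := by rw [hflip]; ring
    _ ≤ (C * (4+4/η)^2) * ((16*(1+η))/(K*η))^(1+η) := by
        apply mul_le_mul hcoef hmono (by positivity) (by positivity)
    _ = C * (4+4/η)^(3+η) / (K/4)^(1+η) := hRHSdec.symm
end

section
/- Let Z₁,…,Z_N be independent random variables with E Zᵢ = 1 and P{|Zᵢ| > t} ≤ C t^{−1−η} for all t > 0, for some C, η > 0. If ε ∈ (0,1) and N ≥ (2C)^{2/η}(1+1/η)^{2/η}/(ε/2)^{2+2/η}, then E|(1/N)Σᵢ Zᵢ − 1| ≤ ε. -/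
open MeasureTheory ProbabilityTheory Set

lemma l1_le_sqrt_l2 {Ω : Type*} [MeasureSpace Ω] [IsProbabilityMeasure (volume : Measure Ω)]
    {f : Ω → ℝ} (hf : MemLp f 2 (volume : Measure Ω)) :
    ∫ ω, |f ω| ≤ Real.sqrt (∫ ω, (f ω)^2) := by
  have hf1 : MemLp f 1 (volume : Measure Ω) := hf.mono_exponent one_le_two
  have e1 := hf1.eLpNorm_eq_integral_rpow_norm one_ne_zero ENNReal.one_ne_top
  have e2 := hf.eLpNorm_eq_integral_rpow_norm two_ne_zero ENNReal.ofNat_ne_top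
  have hle := eLpNorm_le_eLpNorm_of_exponent_le (μ := (volume : Measure Ω)) (p := 1) (q := 2)
    one_le_two hf.aestronglyMeasurable
  rw [e1, e2] at hle
  simp only [ENNReal.toReal_one, ENNReal.toReal_ofNat, Real.rpow_one, inv_one] at hle
  have h2 : (∫ a, ‖f a‖ ^ (2:ℝ)) = ∫ ω, (f ω)^2 := by
    apply integral_congr_ae; filter_upwards with ω
    rw [show (2:ℝ) = ((2:ℕ):ℝ) by norm_num, Real.rpow_natCast, Real.norm_eq_abs, sq_abs]
  rw [h2] at hle
  have hrnn : (0:ℝ) ≤ (∫ ω, (f ω)^2) ^ (2⁻¹ : ℝ) :=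
    Real.rpow_nonneg (integral_nonneg fun ω => sq_nonneg _) _
  have := (ENNReal.ofReal_le_ofReal_iff hrnn).mp hle
  calc ∫ ω, |f ω| = ∫ ω, ‖f ω‖ := by simp [Real.norm_eq_abs]
    _ ≤ (∫ ω, (f ω)^2) ^ (2⁻¹ : ℝ) := this
    _ = Real.sqrt (∫ ω, (f ω)^2) := by
        rw [Real.sqrt_eq_rpow, one_div]


lemma tail_bound {Ω : Type*} [MeasureSpace Ω] [IsProbabilityMeasure (volume : Measure Ω)]
    {g : Ω → ℝ} (hg : Measurable g) (hgi : Integrable g) {C η K : ℝ}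
    (hC : 0 < C) (hη : 0 < η) (hK : 0 < K)
    (htail : ∀ t : ℝ, 0 < t → (volume {ω | t < |g ω|}).toReal ≤ C * t ^ (-1-η)) :
    ∫ ω, |if |g ω| ≤ K then 0 else g ω| ≤ C * K ^ (-η) + C * K ^ (-η) / η := by
  set Y : Ω → ℝ := fun ω => if |g ω| ≤ K then 0 else g ω with hY
  have hYm : Measurable Y := Measurable.ite (measurableSet_le hg.abs measurable_const)
    measurable_const hg
  have hYle : ∀ ω, |Y ω| ≤ |g ω| := by
    intro ω; by_cases h : |g ω| ≤ K <;> simp [hY, h, abs_nonneg]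
  have hYint : Integrable Y := hgi.mono hYm.aestronglyMeasurable
    (Filter.Eventually.of_forall fun ω => by simpa using hYle ω)
  set G : ℝ → ℝ := fun t => (volume {ω | t < |Y ω|}).toReal with hG
  have hlayer : ∫ ω, |Y ω| = ∫ t in Ioi (0:ℝ), G t :=
    hYint.abs.integral_eq_integral_meas_lt (Filter.Eventually.of_forall fun ω => abs_nonneg _)
  have hGanti : Antitone G := fun s t hst => ENNReal.toReal_mono
    (measure_ne_top _ _) (measure_mono fun ω h => lt_of_le_of_lt hst h)
  have hGnn : ∀ t, 0 ≤ G t := fun t => ENNReal.toReal_nonneg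
  have hGm : Measurable G := hGanti.measurable
  -- pointwise bounds
  have hsub1 : ∀ t : ℝ, 0 < t → {ω | t < |Y ω|} ⊆ {ω | K < |g ω|} := by
    intro t ht ω hω
    simp only [mem_setOf_eq] at hω ⊢
    by_contra h
    push_neg at h
    simp only [hY] at hω
    rw [if_pos h] at hω
    simp at hω; linarith
  have hG1 : ∀ t : ℝ, 0 < t → G t ≤ C * K ^ (-1-η) := by
    intro t ht
    exact le_trans (ENNReal.toReal_mono (measure_ne_top _ _) (measure_mono (hsub1 t ht)))
      (htail K hK)
  have hG2 : ∀ t : ℝ, K ≤ t → G t ≤ C * t ^ (-1-η) := by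
    intro t htK
    refine le_trans (ENNReal.toReal_mono (measure_ne_top _ _)
      (measure_mono fun ω h => lt_of_lt_of_le h (hYle ω))) (htail t (lt_of_lt_of_le hK htK))
  -- integrability on the two pieces
  have hint1 : IntegrableOn G (Ioc 0 K) := by
    refine Integrable.mono' (g := fun _ => C * K ^ (-1-η)) (integrable_const _)
      hGm.aestronglyMeasurable ?_
    rw [ae_restrict_iff' measurableSet_Ioc]
    filter_upwards with t ht
    rw [Real.norm_eq_abs, abs_of_nonneg (hGnn t)]
    exact hG1 t ht.1
  have hrint : IntegrableOn (fun t : ℝ => C * t ^ (-1-η)) (Ioi K) :=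
    (integrableOn_Ioi_rpow_of_lt (by linarith) hK).const_mul C
  have hint2 : IntegrableOn G (Ioi K) := by
    refine Integrable.mono' hrint hGm.aestronglyMeasurable ?_
    rw [ae_restrict_iff' measurableSet_Ioi]
    filter_upwards with t ht
    rw [Real.norm_eq_abs, abs_of_nonneg (hGnn t)]
    exact hG2 t ht.le
  have hsplit : ∫ t in Ioi (0:ℝ), G t = (∫ t in Ioc 0 K, G t) + ∫ t in Ioi K, G t := by
    rw [← setIntegral_union (Ioc_disjoint_Ioi le_rfl) measurableSet_Ioi hint1 hint2,
      Ioc_union_Ioi_eq_Ioi hK.le]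
  have hb1 : ∫ t in Ioc 0 K, G t ≤ C * K ^ (-η) := by
    calc ∫ t in Ioc 0 K, G t ≤ ∫ _t in Ioc 0 K, C * K ^ (-1-η) := by
          refine setIntegral_mono_on hint1 (integrableOn_const measure_Ioc_lt_top.ne)
            measurableSet_Ioc fun t ht => hG1 t ht.1
      _ = K * (C * K ^ (-1-η)) := by
          rw [setIntegral_const, Real.volume_real_Ioc_of_le hK.le, smul_eq_mul]; ring_nf
      _ = C * K ^ (-η) := by
          rw [show (-η : ℝ) = (-1-η) + 1 by ring, Real.rpow_add hK, Real.rpow_one]; ring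
  have hb2 : ∫ t in Ioi K, G t ≤ C * K ^ (-η) / η := by
    calc ∫ t in Ioi K, G t ≤ ∫ t in Ioi K, C * t ^ (-1-η) := by
          refine setIntegral_mono_on hint2 hrint measurableSet_Ioi fun t ht => hG2 t ht.le
      _ = C * (-K ^ ((-1-η) + 1) / ((-1-η) + 1)) := by
          rw [integral_const_mul, integral_Ioi_rpow_of_lt (by linarith) hK]
      _ = C * K ^ (-η) / η := by
          rw [show (-1-η) + 1 = -η by ring]
          field_simp
  rw [hlayer, hsplit]
  linarith


theorem mean_concentration {N : ℕ}
    {Ω : Type*} [MeasureSpace Ω] [IsProbabilityMeasure (volume : Measure Ω)]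
    (Z : Fin N → Ω → ℝ) (hmeas : ∀ i, Measurable (Z i))
    (hindep : iIndepFun Z volume)
    (hint : ∀ i, Integrable (Z i)) (hmean : ∀ i, ∫ ω, Z i ω = 1)
    (C η : ℝ) (hC : 0 < C) (hη : 0 < η)
    (htail : ∀ i, ∀ t : ℝ, 0 < t →
      (volume {ω | t < |Z i ω|}).toReal ≤ C * t ^ (-1 - η))
    (ε : ℝ) (hε : ε ∈ Set.Ioo (0 : ℝ) 1)
    (hN : (2 * C) ^ (2 / η) * (1 + 1 / η) ^ (2 / η) / (ε / 2) ^ (2 + 2 / η) ≤ N) :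
    ∫ ω, |(N : ℝ)⁻¹ * ∑ i, Z i ω - 1| ≤ ε := by
  obtain ⟨hε0, hε1⟩ := hε
  have hε2 : (0:ℝ) < ε/2 := by linarith
  have hNpos : (0:ℝ) < N := lt_of_lt_of_le (by positivity) hN
  set K : ℝ := ε/2 * Real.sqrt N with hKdef
  have hsN : (0:ℝ) < Real.sqrt N := Real.sqrt_pos.2 hNpos
  have hK : 0 < K := mul_pos hε2 hsN
  set B : ℝ := C * K ^ (-η) + C * K ^ (-η) / η with hBdef
  -- numeric bound B ≤ ε/4
  have hKη : 2*C*(1+1/η)/(ε/2) ≤ K ^ η := by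
    have hA0 : (0:ℝ) < 2*C*(1+1/η) := by positivity
    set A : ℝ := 2*C*(1+1/η) / (ε/2) ^ (1+η) with hAdef
    have hA : 0 < A := div_pos hA0 (Real.rpow_pos_of_pos hε2 _)
    have hkey : ((ε/2) ^ ((1:ℝ)+η)) ^ (2/η) = (ε/2) ^ (2+2/η) := by
      rw [← Real.rpow_mul hε2.le]
      congr 1
      field_simp
      ring
    have h2 : A ^ (2/η) ≤ (N:ℝ) := by
      rw [hAdef, Real.div_rpow hA0.le (Real.rpow_nonneg hε2.le _), hkey,
        Real.mul_rpow (by positivity) (by positivity)]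
      exact hN
    have h3 : A ≤ (N:ℝ) ^ (η/2) := by
      have := Real.rpow_le_rpow (Real.rpow_nonneg hA.le _) h2 (by positivity : (0:ℝ) ≤ η/2)
      rwa [← Real.rpow_mul hA.le, show (2/η)*(η/2) = 1 by field_simp, Real.rpow_one] at this
    have h4 : K ^ η = (ε/2) ^ η * (N:ℝ) ^ (η/2) := by
      rw [hKdef, Real.mul_rpow hε2.le (Real.sqrt_nonneg _),
        Real.sqrt_eq_rpow, ← Real.rpow_mul (Nat.cast_nonneg N)]
      ring_nf
    rw [h4]
    calc 2*C*(1+1/η)/(ε/2) = (ε/2) ^ η * A := by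
          rw [hAdef, Real.rpow_add hε2, Real.rpow_one]
          field_simp
      _ ≤ (ε/2) ^ η * (N:ℝ) ^ (η/2) :=
          mul_le_mul_of_nonneg_left h3 (Real.rpow_nonneg hε2.le _)
  have hBε : B ≤ ε/4 := by
    have hKηpos : 0 < K ^ η := Real.rpow_pos_of_pos hK _
    have hKneg : K ^ (-η) = (K ^ η)⁻¹ := by rw [Real.rpow_neg hK.le]
    have hA' : (0:ℝ) < 2*C*(1+1/η)/(ε/2) := by positivity
    have hinv : (K ^ η)⁻¹ ≤ (2*C*(1+1/η)/(ε/2))⁻¹ := by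
      have := one_div_le_one_div_of_le hA' hKη
      rwa [one_div, one_div] at this
    have hBeq : B = C*(1+1/η) * (K ^ η)⁻¹ := by
      rw [hBdef, hKneg]
      field_simp
    calc B = C*(1+1/η) * (K ^ η)⁻¹ := hBeq
      _ ≤ C*(1+1/η) * (2*C*(1+1/η)/(ε/2))⁻¹ :=
          mul_le_mul_of_nonneg_left hinv (by positivity)
      _ = ε/4 := by
          field_simp
          ring
  -- truncation
  set φ : ℝ → ℝ := fun x => if |x| ≤ K then x else 0 with hφdef
  have hφm : Measurable φ :=
    Measurable.ite (measurableSet_le measurable_abs measurable_const) measurable_id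
      measurable_const
  set X : Fin N → Ω → ℝ := fun i => φ ∘ Z i with hXdef
  have hXm : ∀ i, Measurable (X i) := fun i => hφm.comp (hmeas i)
  have hXval : ∀ i ω, X i ω = if |Z i ω| ≤ K then Z i ω else 0 := fun i ω => rfl
  have hXbd : ∀ i ω, |X i ω| ≤ K := by
    intro i ω
    rw [hXval]
    by_cases h : |Z i ω| ≤ K
    · rwa [if_pos h]
    · rw [if_neg h]; simpa using hK.le
  have hXleZ : ∀ i ω, |X i ω| ≤ |Z i ω| := by
    intro i ω
    rw [hXval]
    by_cases h : |Z i ω| ≤ K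
    · rw [if_pos h]
    · rw [if_neg h]; simp [abs_nonneg]
  have hXint : ∀ i, Integrable (X i) := fun i =>
    (hint i).mono (hXm i).aestronglyMeasurable
      (Filter.Eventually.of_forall fun ω => by simpa using hXleZ i ω)
  have hXmem : ∀ i, MemLp (X i) 2 (volume : Measure Ω) := fun i =>
    MemLp.of_bound (hXm i).aestronglyMeasurable K
      (Filter.Eventually.of_forall fun ω => by rw [Real.norm_eq_abs]; exact hXbd i ω)
  set Y : Fin N → Ω → ℝ := fun i ω => if |Z i ω| ≤ K then 0 else Z i ω with hYdef
  have hZXY : ∀ i ω, Z i ω = X i ω + Y i ω := by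
    intro i ω
    rw [hXval]
    by_cases h : |Z i ω| ≤ K <;> simp [hYdef, h]
  have hYm : ∀ i, Measurable (Y i) := fun i =>
    Measurable.ite (measurableSet_le (hmeas i).abs measurable_const) measurable_const (hmeas i)
  have hYint : ∀ i, Integrable (Y i) := by
    intro i
    have : Y i = fun ω => Z i ω - X i ω := by
      funext ω; rw [hZXY i ω]; ring
    rw [this]; exact (hint i).sub (hXint i)
  have hYB : ∀ i, ∫ ω, |Y i ω| ≤ B := fun i =>
    tail_bound (hmeas i) (hint i) hC hη hK (htail i)
  have hEX : ∀ i, |(∫ ω, X i ω) - 1| ≤ B := by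
    intro i
    have hsplit : ∫ ω, Z i ω = (∫ ω, X i ω) + ∫ ω, Y i ω := by
      rw [← integral_add (hXint i) (hYint i)]
      exact integral_congr_ae (Filter.Eventually.of_forall fun ω => hZXY i ω)
    have h1 : (∫ ω, X i ω) - 1 = -(∫ ω, Y i ω) := by
      rw [← hmean i, hsplit]; ring
    rw [h1, abs_neg]
    calc |∫ ω, Y i ω| ≤ ∫ ω, |Y i ω| := by
          simpa [Real.norm_eq_abs] using norm_integral_le_integral_norm (μ := (volume : Measure Ω)) (Y i)
      _ ≤ B := hYB i
  -- variance bounds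
  have hvarX : ∀ i, variance (X i) volume ≤ K^2 := by
    intro i
    rw [variance_eq_sub (hXmem i)]
    have h1 : (∫ ω, (X i ω)^2) ≤ K^2 := by
      calc ∫ ω, (X i ω)^2 ≤ ∫ _ω, K^2 ∂(volume : Measure Ω) := by
            refine integral_mono (hXmem i).integrable_sq (integrable_const _) fun ω => ?_
            have := hXbd i ω
            calc (X i ω)^2 = |X i ω|^2 := (sq_abs _).symm
              _ ≤ K^2 := by nlinarith [abs_nonneg (X i ω)]
        _ = K^2 := by simp
    have h2 : (0:ℝ) ≤ (∫ ω, X i ω)^2 := sq_nonneg _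
    have : (volume : Measure Ω)[X i ^ 2] = ∫ ω, (X i ω)^2 := by
      simp [Pi.pow_apply]
    nlinarith [this]
  have hXindep : iIndepFun X volume :=
    hindep.comp (fun _ => φ) (fun _ => hφm)
  have hvarS : variance (∑ i, X i) volume ≤ (N:ℝ) * K^2 := by
    rw [IndepFun.variance_sum (fun i _ => hXmem i)
      (fun i _ j _ hij => hXindep.indepFun hij)]
    calc ∑ i, variance (X i) volume ≤ ∑ _i : Fin N, K^2 :=
          Finset.sum_le_sum fun i _ => hvarX i
      _ = (N:ℝ) * K^2 := by simp [Finset.sum_const]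
  -- Cauchy-Schwarz step
  set S : Ω → ℝ := ∑ i, X i with hSdef
  have hSapp : ∀ ω, S ω = ∑ i, X i ω := fun ω => by rw [hSdef]; simp
  have hSmem : MemLp S 2 (volume : Measure Ω) := memLp_finset_sum' _ (fun i _ => hXmem i)
  have hSint : Integrable S := hSmem.integrable one_le_two
  set m : ℝ := ∫ ω, S ω with hmdef
  have hCS : ∫ ω, |S ω - m| ≤ Real.sqrt N * K := by
    have hmem : MemLp (fun ω => S ω - m) 2 (volume : Measure Ω) := hSmem.sub (memLp_const m)
    have h1 := l1_le_sqrt_l2 hmem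
    have hveq : (∫ ω, (S ω - m)^2) = variance S volume := by
      rw [variance_eq_integral hSmem.aestronglyMeasurable.aemeasurable]
    calc ∫ ω, |S ω - m| ≤ Real.sqrt (∫ ω, (S ω - m)^2) := h1
      _ ≤ Real.sqrt ((N:ℝ) * K^2) := by
          apply Real.sqrt_le_sqrt
          rw [hveq]
          exact hvarS
      _ = Real.sqrt N * K := by
          rw [Real.sqrt_mul (Nat.cast_nonneg N), Real.sqrt_sq hK.le]
  -- assembly
  have hpt : ∀ ω, |(N : ℝ)⁻¹ * ∑ i, Z i ω - 1| ≤
      (N:ℝ)⁻¹ * |S ω - m| + |(N:ℝ)⁻¹ * m - 1| + (N:ℝ)⁻¹ * ∑ i, |Y i ω| := by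
    intro ω
    have hNinv : (0:ℝ) ≤ (N:ℝ)⁻¹ := by positivity
    have hsum : ∑ i, Z i ω = S ω + ∑ i, Y i ω := by
      rw [hSapp, ← Finset.sum_add_distrib]
      exact Finset.sum_congr rfl fun i _ => hZXY i ω
    have heq : (N : ℝ)⁻¹ * ∑ i, Z i ω - 1 =
        ((N:ℝ)⁻¹ * (S ω - m)) + ((N:ℝ)⁻¹ * m - 1) + (N:ℝ)⁻¹ * ∑ i, Y i ω := by
      rw [hsum]; ring
    rw [heq]
    calc |((N:ℝ)⁻¹ * (S ω - m)) + ((N:ℝ)⁻¹ * m - 1) + (N:ℝ)⁻¹ * ∑ i, Y i ω|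
        ≤ |(N:ℝ)⁻¹ * (S ω - m)| + |(N:ℝ)⁻¹ * m - 1| + |(N:ℝ)⁻¹ * ∑ i, Y i ω| :=
          (abs_add_le _ _).trans (add_le_add (abs_add_le _ _) le_rfl)
      _ ≤ (N:ℝ)⁻¹ * |S ω - m| + |(N:ℝ)⁻¹ * m - 1| + (N:ℝ)⁻¹ * ∑ i, |Y i ω| := by
          rw [abs_mul, abs_mul, abs_of_nonneg hNinv]
          gcongr
          exact Finset.abs_sum_le_sum_abs _ _
  have hint1 : Integrable (fun ω => (N:ℝ)⁻¹ * |S ω - m|) :=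
    ((hSint.sub (integrable_const m)).abs.const_mul _)
  have hint3 : Integrable (fun ω => (N:ℝ)⁻¹ * ∑ i, |Y i ω|) :=
    (integrable_finset_sum _ (fun i _ => (hYint i).abs)).const_mul _
  have hintR : Integrable (fun ω => (N:ℝ)⁻¹ * |S ω - m| + |(N:ℝ)⁻¹ * m - 1|
      + (N:ℝ)⁻¹ * ∑ i, |Y i ω|) := (hint1.add (integrable_const _)).add hint3
  have hmain := integral_mono_of_nonneg
    (Filter.Eventually.of_forall fun ω => abs_nonneg _) hintR
    (Filter.Eventually.of_forall hpt)
  have hRHS : ∫ ω, ((N:ℝ)⁻¹ * |S ω - m| + |(N:ℝ)⁻¹ * m - 1| + (N:ℝ)⁻¹ * ∑ i, |Y i ω|)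
      = (N:ℝ)⁻¹ * (∫ ω, |S ω - m|) + |(N:ℝ)⁻¹ * m - 1|
        + (N:ℝ)⁻¹ * ∑ i, ∫ ω, |Y i ω| := by
    rw [integral_add (f := fun ω => (N:ℝ)⁻¹ * |S ω - m| + |(N:ℝ)⁻¹ * m - 1|)
        (g := fun ω => (N:ℝ)⁻¹ * ∑ i, |Y i ω|) (hint1.add (integrable_const _)) hint3,
      integral_add (f := fun ω => (N:ℝ)⁻¹ * |S ω - m|) (g := fun _ => |(N:ℝ)⁻¹ * m - 1|)
        hint1 (integrable_const _), integral_const_mul, integral_const_mul,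
      integral_const, integral_finset_sum _ (fun i _ => (hYint i).abs)]
    simp
  -- bound the three pieces
  have hb1 : (N:ℝ)⁻¹ * (∫ ω, |S ω - m|) ≤ ε/2 := by
    calc (N:ℝ)⁻¹ * (∫ ω, |S ω - m|) ≤ (N:ℝ)⁻¹ * (Real.sqrt N * K) :=
          mul_le_mul_of_nonneg_left hCS (by positivity)
      _ = ε/2 := by
          rw [hKdef]
          rw [show Real.sqrt N * (ε/2 * Real.sqrt N) = ε/2 * (Real.sqrt N * Real.sqrt N) by ring,
            Real.mul_self_sqrt (Nat.cast_nonneg N)]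
          field_simp
  have hNne : (N:ℝ) ≠ 0 := ne_of_gt hNpos
  have hb2 : |(N:ℝ)⁻¹ * m - 1| ≤ B := by
    have hmsum : m = ∑ i, ∫ ω, X i ω := by
      rw [hmdef]
      simp only [hSdef, Finset.sum_apply]
      exact integral_finset_sum _ (fun i _ => hXint i)
    have heq2 : (N:ℝ)⁻¹ * m - 1 = (N:ℝ)⁻¹ * ∑ i, ((∫ ω, X i ω) - 1) := by
      rw [hmsum, Finset.sum_sub_distrib, Finset.sum_const, Finset.card_univ,
        Fintype.card_fin, nsmul_eq_mul, mul_one, mul_sub, inv_mul_cancel₀ hNne]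
    rw [heq2, abs_mul, abs_of_nonneg (by positivity : (0:ℝ) ≤ (N:ℝ)⁻¹)]
    calc (N:ℝ)⁻¹ * |∑ i, ((∫ ω, X i ω) - 1)| ≤ (N:ℝ)⁻¹ * ∑ i, |(∫ ω, X i ω) - 1| :=
          mul_le_mul_of_nonneg_left (Finset.abs_sum_le_sum_abs _ _) (by positivity)
      _ ≤ (N:ℝ)⁻¹ * ∑ _i : Fin N, B :=
          mul_le_mul_of_nonneg_left (Finset.sum_le_sum fun i _ => hEX i) (by positivity)
      _ = B := by
          rw [Finset.sum_const, Finset.card_univ, Fintype.card_fin, nsmul_eq_mul,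
            ← mul_assoc, inv_mul_cancel₀ hNne, one_mul]
  have hb3 : (N:ℝ)⁻¹ * ∑ i, ∫ ω, |Y i ω| ≤ B := by
    calc (N:ℝ)⁻¹ * ∑ i, ∫ ω, |Y i ω| ≤ (N:ℝ)⁻¹ * ∑ _i : Fin N, B :=
          mul_le_mul_of_nonneg_left (Finset.sum_le_sum fun i _ => hYB i) (by positivity)
      _ = B := by
          rw [Finset.sum_const, Finset.card_univ, Fintype.card_fin, nsmul_eq_mul,
            ← mul_assoc, inv_mul_cancel₀ hNne, one_mul]
  calc ∫ ω, |(N : ℝ)⁻¹ * ∑ i, Z i ω - 1| ≤ _ := hmain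
    _ = _ := hRHS
    _ ≤ ε/2 + B + B := add_le_add (add_le_add hb1 hb2) hb3
    _ ≤ ε := by linarith
end
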